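/- arXiv:1810.00265 — 3 statements merged into one kernel-verified Lean document; each statement's English description precedes it below -/
import Mathlib

section
/- Let φ, ψ be locally finite subsets of ℝ^d such that (φ,ψ) contains no infinite descending chain. Then φ_∞ = ∅ or ψ_∞ = ∅ (i.e. at least one of the two configurations is completely matched by the mutual nearest neighbour matching), and there is a unique stable partial matching from φ to ψ, namely the one produced by the mutual nearest neighbour matching. -/
open MeasureTheory Set Metric
open scoped ENNReal ENat NNReal Pointwise

noncomputable section

/-- `ℝ^d`. -/
abbrev V (d : ℕ) := EuclideanSpace ℝ (Fin d)

variable {d : ℕ}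

/-- `x` is lexicographically strictly smaller than `y`. -/
def lexLT (x y : V d) : Prop := ∃ i : Fin d, x i < y i ∧ ∀ j : Fin d, j < i → x j = y j

/-- A point `p` of the first configuration prefers `x` to `y` (both in the second
configuration): closer, or at equal distance and lexicographically smaller. -/
def prefPhi (p x y : V d) : Prop :=
  dist x p < dist y p ∨ (dist x p = dist y p ∧ lexLT x y)

/-- A point `x` of the second configuration prefers `p` to `q` (both in the first
configuration): closer, or at equal distance and lexicographically greater. -/
def prefPsi (x p q : V d) : Prop :=
  dist p x < dist q x ∨ (dist p x = dist q x ∧ lexLT q p)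

/-- Preference over `Option` values: every point is preferred to `∞` (= `none`). -/
def prefPhiOpt (p x : V d) : Option (V d) → Prop
  | none => True
  | some y => prefPhi p x y

/-- Preference over `Option` values: every point is preferred to `∞` (= `none`). -/
def prefPsiOpt (x p : V d) : Option (V d) → Prop
  | none => True
  | some q => prefPsi x p q

/-- `p ∈ φ` and `x ∈ ψ` are mutually most preferred points of each other. -/
def MutualNN (φ ψ : Set (V d)) (p x : V d) : Prop :=
  p ∈ φ ∧ x ∈ ψ ∧ (∀ y ∈ ψ, y ≠ x → prefPhi p x y) ∧ (∀ q ∈ φ, q ≠ p → prefPsi x p q)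

/-- The pair `(φ_n, ψ_n)` of configurations of still unmatched points after `n` rounds of the
mutual nearest neighbour matching algorithm. -/
def stages (φ ψ : Set (V d)) : ℕ → Set (V d) × Set (V d)
  | 0 => (φ, ψ)
  | n + 1 =>
      let s := stages φ ψ n
      (s.1 \ {p | ∃ x, MutualNN s.1 s.2 p x}, s.2 \ {x | ∃ p, MutualNN s.1 s.2 p x})

/-- `φ_∞`, the set of points of `φ` never matched by the algorithm. -/
def phiInf (φ ψ : Set (V d)) : Set (V d) := ⋂ n, (stages φ ψ n).1

/-- `ψ_∞`, the set of points of `ψ` never matched by the algorithm. -/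
def psiInf (φ ψ : Set (V d)) : Set (V d) := ⋂ n, (stages φ ψ n).2

open Classical in
/-- The mutual nearest neighbour matching `τ(φ, ψ, ·)`; the value `none` represents `∞`,
points outside `φ ∪ ψ` are mapped to themselves. -/
def matchTau (φ ψ : Set (V d)) (z : V d) : Option (V d) :=
  if z ∈ φ then
    if h : ∃ x, ∃ n, MutualNN (stages φ ψ n).1 (stages φ ψ n).2 z x then some h.choose
    else none
  else if z ∈ ψ then
    if h : ∃ p, ∃ n, MutualNN (stages φ ψ n).1 (stages φ ψ n).2 p z then some h.choose
    else none
  else some z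

/-- A locally finite subset of `ℝ^d`. -/
def LocFinite (φ : Set (V d)) : Prop := ∀ r : ℝ, (φ ∩ closedBall 0 r).Finite

/-- `t` is a partial matching between `φ` and `ψ` (with `none` = unmatched). -/
def IsPartialMatching (φ ψ : Set (V d)) (t : V d → Option (V d)) : Prop :=
  (∀ p ∈ φ, ∀ x, t p = some x → x ∈ ψ) ∧ (∀ x ∈ ψ, ∀ p, t x = some p → p ∈ φ) ∧
  (∀ p ∈ φ, ∀ x ∈ ψ, (t p = some x ↔ t x = some p))

/-- `t` is a stable partial matching between `φ` and `ψ`: a partial matching admitting no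
unstable pair `(p, x)`, i.e. no pair where `x` prefers `p` to `t x` and `p` prefers `x`
to `t p`. -/
def IsStableMatching (φ ψ : Set (V d)) (t : V d → Option (V d)) : Prop :=
  IsPartialMatching φ ψ t ∧
  ¬ ∃ p ∈ φ, ∃ x ∈ ψ, prefPsiOpt x p (t x) ∧ prefPhiOpt p x (t p)

/-- `(z 0, …, z (n-1))`, `n ≥ 2`, is a descending chain in `(φ, ψ)`: points at even positions
belong to `φ`, points at odd positions to `ψ`, and every interior point prefers its successor
to its predecessor. (This corresponds to the 1-based chain `(z_1, …, z_n)` of the paper.) -/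
def DescChain (φ ψ : Set (V d)) (n : ℕ) (z : ℕ → V d) : Prop :=
  2 ≤ n ∧ (∀ i < n, if Even i then z i ∈ φ else z i ∈ ψ) ∧
    ∀ i, 1 ≤ i → i + 1 < n →
      (if Even i then prefPhi (z i) (z (i + 1)) (z (i - 1))
       else prefPsi (z i) (z (i + 1)) (z (i - 1)))

/-- Descending chain starting with a point of `ψ` (even positions in `ψ`, odd in `φ`). -/
def DescChainPsiStart (φ ψ : Set (V d)) (n : ℕ) (z : ℕ → V d) : Prop :=
  2 ≤ n ∧ (∀ i < n, if Even i then z i ∈ ψ else z i ∈ φ) ∧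
    ∀ i, 1 ≤ i → i + 1 < n →
      (if Even i then prefPsi (z i) (z (i + 1)) (z (i - 1))
       else prefPhi (z i) (z (i + 1)) (z (i - 1)))

/-- An infinite descending chain in `(φ, ψ)`. -/
def InfDescChain (φ ψ : Set (V d)) (z : ℕ → V d) : Prop :=
  (∀ i, if Even i then z i ∈ φ else z i ∈ ψ) ∧
    ∀ i, 1 ≤ i →
      (if Even i then prefPhi (z i) (z (i + 1)) (z (i - 1))
       else prefPsi (z i) (z (i + 1)) (z (i - 1)))

/-- The union of balls `F_c` associated with a chain `c` of length `n`:
`B(c 0, ‖c 1 − c 0‖) ∪ ⋃_{i=1}^{n-1} B(c i, ‖c i − c (i-1)‖)`. -/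
def chainBalls (n : ℕ) (c : ℕ → V d) : Set (V d) :=
  closedBall (c 0) (dist (c 1) (c 0)) ∪
    ⋃ i ∈ Finset.Ico 1 n, closedBall (c i) (dist (c i) (c (i - 1)))

open Classical in
/-- The matching flower `F(φ, ψ, z)` of a point `z`: all of `ℝ^d` if `z ∈ φ ∪ ψ` is unmatched,
`{z}` if `z ∉ φ ∪ ψ`, and otherwise the union of the ball sets of all competing chains for `z`,
i.e. descending chains starting at `z` whose second point is equal to, or preferred by `z` to,
the matching partner of `z`. -/
def flower (φ ψ : Set (V d)) (z : V d) : Set (V d) :=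
  if z ∈ φ then
    match matchTau φ ψ z with
    | none => Set.univ
    | some w =>
        ⋃ (n : ℕ) (c : ℕ → V d)
          (_ : DescChain φ ψ n c ∧ c 0 = z ∧ (c 1 = w ∨ prefPhi z (c 1) w)),
          chainBalls n c
  else if z ∈ ψ then
    match matchTau φ ψ z with
    | none => Set.univ
    | some w =>
        ⋃ (n : ℕ) (c : ℕ → V d)
          (_ : DescChainPsiStart φ ψ n c ∧ c 0 = z ∧ (c 1 = w ∨ prefPsi z (c 1) w)),
          chainBalls n c
  else {z}

/-- The lattice `ℤ^d` as a subset of `ℝ^d`. -/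
def lattice (d : ℕ) : Set (V d) := Set.range (fun k : Fin d → ℤ => (WithLp.toLp 2 (fun i => (k i : ℝ)) : V d))


/-- The point of `ℝ^d` with the given integer coordinates. -/
def intVec {d : ℕ} (k : Fin d → ℤ) : V d := WithLp.toLp 2 (fun i => (k i : ℝ))

/-- Translation of a configuration by a vector. -/
def shift (φ : Set (V d)) (x : V d) : Set (V d) := (· + x) '' φ

/-- The set of matched points of `ψ` in the mutual nearest neighbour matching of `φ`
with `ψ`. -/
def matchedPsi (φ ψ : Set (V d)) : Set (V d) := {x ∈ ψ | matchTau φ ψ x ≠ none}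

open Classical in
/-- The matching status `M(φ, ψ, z)`: `1` if `z` is matched, `0` otherwise. -/
def matchStatus (φ ψ : Set (V d)) (z : V d) : ℝ :=
  if ∃ w, matchTau φ ψ z = some w ∧ w ∈ φ ∪ ψ then 1 else 0

/-- The σ-field on configurations generated by the counting maps `φ ↦ #(φ ∩ B)`,
`B` Borel. -/
def configSA (d : ℕ) : MeasurableSpace (Set (V d)) :=
  MeasurableSpace.generateFrom
    {A | ∃ (B : Set (V d)) (n : ℕ), MeasurableSet B ∧ A = {φ | (φ ∩ B).encard = (n : ℕ∞)}}

/-- Measurability of a configuration-valued map with respect to the counting σ-field. -/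
def PPMeasurable {Ω : Type*} [MeasurableSpace Ω] (Φ : Ω → Set (V d)) : Prop :=
  ∀ A : Set (Set (V d)), MeasurableSet[configSA d] A → MeasurableSet (Φ ⁻¹' A)

/-- The closed unit cube `[0,1]^d`. -/
def cube01 (d : ℕ) : Set (V d) := {y | ∀ i, y i ∈ Set.Icc (0 : ℝ) 1}

/-- The half-open unit cube `[0,1)^d`. -/
def cube01' (d : ℕ) : Set (V d) := {y | ∀ i, y i ∈ Set.Ico (0 : ℝ) 1}

/-- `Ψ` is a point process: measurable (for the counting σ-field) and almost surely locally
finite. -/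
def IsPointProcess {Ω : Type*} [MeasurableSpace Ω] (P : Measure Ω) (Ψ : Ω → Set (V d)) : Prop :=
  PPMeasurable Ψ ∧ ∀ᵐ ω ∂P, LocFinite (Ψ ω)

/-- `Ψ` is a stationary point process: the distribution is invariant under all
translations. -/
def IsStationaryPP {Ω : Type*} [MeasurableSpace Ω] (P : Measure Ω) (Ψ : Ω → Set (V d)) : Prop :=
  IsPointProcess P Ψ ∧
    ∀ (x : V d) (A : Set (Set (V d))), MeasurableSet[configSA d] A →
      P {ω | shift (Ψ ω) x ∈ A} = P {ω | Ψ ω ∈ A}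

/-- `Ψ` has intensity `α`: the expected number of points in `[0,1]^d` equals `α`. -/
def HasIntensity {Ω : Type*} [MeasurableSpace Ω] (P : Measure Ω) (Ψ : Ω → Set (V d))
    (α : ℝ) : Prop :=
  ∫⁻ ω, ((Ψ ω ∩ cube01 d).encard : ℝ≥0∞) ∂P = ENNReal.ofReal α

/-- `Ψ` is a stationary Poisson process with intensity `α`: Poisson counts with mean
`α λ_d(B)` on every Borel set of finite volume, and independent counts on pairwise disjoint
Borel sets. -/
def IsPoissonPP {Ω : Type*} [MeasurableSpace Ω] (P : Measure Ω) (Ψ : Ω → Set (V d))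
    (α : ℝ) : Prop :=
  IsPointProcess P Ψ ∧
  (∀ B : Set (V d), MeasurableSet B → volume B < ⊤ → ∀ n : ℕ,
      P {ω | (Ψ ω ∩ B).encard = (n : ℕ∞)} =
        ENNReal.ofReal (Real.exp (-(α * (volume B).toReal)) *
          (α * (volume B).toReal) ^ n / n.factorial)) ∧
  (∀ (k : ℕ) (B : Fin k → Set (V d)), (∀ i, MeasurableSet (B i)) →
      Pairwise (Function.onFun Disjoint B) →
      ∀ n : Fin k → ℕ,
        P {ω | ∀ i, (Ψ ω ∩ B i).encard = (n i : ℕ∞)} =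
          ∏ i, P {ω | (Ψ ω ∩ B i).encard = (n i : ℕ∞)})

/-- `Ψ` has `n`-th correlation function `ρ`: for every measurable `f ≥ 0`, the expected sum of
`f` over `n`-tuples of pairwise distinct points of `Ψ` equals `∫ f ρ`. -/
def HasCorrelationFunction {Ω : Type*} [MeasurableSpace Ω] (P : Measure Ω)
    (Ψ : Ω → Set (V d)) (n : ℕ) (ρ : (Fin n → V d) → ℝ≥0∞) : Prop :=
  Measurable ρ ∧
    ∀ f : (Fin n → V d) → ℝ≥0∞, Measurable f →
      ∫⁻ ω, ∑' t : {t : Fin n → V d // (∀ i, t i ∈ Ψ ω) ∧ Function.Injective t}, f t ∂P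
        = ∫⁻ x, f x * ρ x ∂(volume : Measure (Fin n → V d))

/-- The `α_{p,q}(s)` mixing coefficient of a point process: supremum of covariances of
`{0,1}`-valued functionals of the restrictions of `Ψ` to sets `A`, `B` of volume at most
`p` resp. `q` and mutual distance at least `s`. -/
def mixingCoef {Ω : Type*} [MeasurableSpace Ω] (P : Measure Ω) (Ψ : Ω → Set (V d))
    (p q s : ℝ) : ℝ :=
  sSup {v : ℝ | ∃ (S T : Set (Set (V d))) (A B : Set (V d)),
    MeasurableSet[configSA d] S ∧ MeasurableSet[configSA d] T ∧
    MeasurableSet A ∧ MeasurableSet B ∧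
    volume A ≤ ENNReal.ofReal p ∧ volume B ≤ ENNReal.ofReal q ∧
    (∀ a ∈ A, ∀ b ∈ B, s ≤ dist a b) ∧
    v = |(P {ω | Ψ ω ∩ A ∈ S ∧ Ψ ω ∩ B ∈ T}).toReal -
          (P {ω | Ψ ω ∩ A ∈ S}).toReal * (P {ω | Ψ ω ∩ B ∈ T}).toReal|}


section AuxMNN
variable {d : ℕ}


noncomputable instance lexPiLO {d : ℕ} : LinearOrder (Lex (Fin d → ℝ)) :=
  @linearOrderOfSTO (Πₗ _ : Fin d, ℝ) (· < ·)
    { trichotomous := (Pi.isTrichotomous_lex _ _ IsWellFounded.wf).1 } (Classical.decRel _)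

/-- The underlying function of a point, viewed in the lexicographic order. -/
def lexOf (x : V d) : Lex (Fin d → ℝ) := toLex (show Fin d → ℝ from x)

lemma lexLT_iff {x y : V d} : lexLT x y ↔ lexOf x < lexOf y :=
  ⟨fun ⟨i, h1, h2⟩ => ⟨i, h2, h1⟩, fun ⟨i, h1, h2⟩ => ⟨i, h2, h1⟩⟩

lemma lexOf_inj {x y : V d} (h : lexOf x = lexOf y) : x = y := by
  refine PiLp.ext fun i => ?_; exact congrFun (ofLex_inj.mpr h) i

/-- Key for `prefPhi`. -/
def kPhi (p x : V d) : ℝ ×ₗ Lex (Fin d → ℝ) := toLex (dist x p, lexOf x)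

/-- Key for `prefPsi`. -/
def kPsi (x p : V d) : ℝ ×ₗ (Lex (Fin d → ℝ))ᵒᵈ :=
  toLex (dist p x, OrderDual.toDual (lexOf p))

lemma prefPhi_iff {p x y : V d} : prefPhi p x y ↔ kPhi p x < kPhi p y := by
  rw [prefPhi, kPhi, kPhi, Prod.Lex.lt_iff]
  exact or_congr Iff.rfl (and_congr Iff.rfl lexLT_iff)

lemma prefPsi_iff {x p q : V d} : prefPsi x p q ↔ kPsi x p < kPsi x q := by
  rw [prefPsi, kPsi, kPsi, Prod.Lex.lt_iff]
  refine or_congr Iff.rfl (and_congr Iff.rfl ?_)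
  rw [lexLT_iff]
  exact Iff.symm OrderDual.toDual_lt_toDual

lemma kPhi_inj {p x y : V d} (h : kPhi p x = kPhi p y) : x = y := by
  have := congrArg (fun w => (ofLex w).2) h
  exact lexOf_inj this

lemma kPsi_inj {x p q : V d} (h : kPsi x p = kPsi x q) : p = q := by
  have := congrArg (fun w => (ofLex w).2) h
  exact lexOf_inj (OrderDual.toDual_inj.mp this)

lemma prefPhi_asymm {p x y : V d} (h1 : prefPhi p x y) (h2 : prefPhi p y x) : False :=
  lt_asymm (prefPhi_iff.mp h1) (prefPhi_iff.mp h2)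

lemma prefPsi_asymm {x p q : V d} (h1 : prefPsi x p q) (h2 : prefPsi x q p) : False :=
  lt_asymm (prefPsi_iff.mp h1) (prefPsi_iff.mp h2)

lemma prefPhi_irrefl {p x : V d} : ¬ prefPhi p x x := fun h => lt_irrefl _ (prefPhi_iff.mp h)

lemma prefPsi_irrefl {x p : V d} : ¬ prefPsi x p p := fun h => lt_irrefl _ (prefPsi_iff.mp h)

lemma prefPhi_total {p x y : V d} (h : x ≠ y) : prefPhi p x y ∨ prefPhi p y x := by
  rcases lt_or_gt_of_ne (fun he => h (kPhi_inj he) : kPhi p x ≠ kPhi p y) with h' | h'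
  · exact Or.inl (prefPhi_iff.mpr h')
  · exact Or.inr (prefPhi_iff.mpr h')

lemma prefPsi_total {x p q : V d} (h : p ≠ q) : prefPsi x p q ∨ prefPsi x q p := by
  rcases lt_or_gt_of_ne (fun he => h (kPsi_inj he) : kPsi x p ≠ kPsi x q) with h' | h'
  · exact Or.inl (prefPsi_iff.mpr h')
  · exact Or.inr (prefPsi_iff.mpr h')

lemma dist_le_of_not_prefPhi {p x y : V d} (h : ¬ prefPhi p x y) : dist y p ≤ dist x p := by
  have : kPhi p y ≤ kPhi p x := le_of_not_gt (fun h' => h (prefPhi_iff.mpr h'))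
  rcases (Prod.Lex.le_iff).mp this with h' | h'
  · exact h'.le
  · exact h'.1.le

lemma dist_le_of_not_prefPsi {x p q : V d} (h : ¬ prefPsi x p q) : dist q x ≤ dist p x := by
  have : kPsi x q ≤ kPsi x p := le_of_not_gt (fun h' => h (prefPsi_iff.mpr h'))
  rcases (Prod.Lex.le_iff).mp this with h' | h'
  · exact h'.le
  · exact h'.1.le

lemma LocFinite.mono {S T : Set (V d)} (h : S ⊆ T) (hT : LocFinite T) : LocFinite S :=
  fun r => (hT r).subset (Set.inter_subset_inter_left _ h)

lemma exists_fav_phi {S : Set (V d)} (hfin : LocFinite S) (hS : S.Nonempty) (p : V d) :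
    ∃ x ∈ S, ∀ y ∈ S, y ≠ x → prefPhi p x y := by
  obtain ⟨s, hs⟩ := hS
  have hTfin : {y ∈ S | dist y p ≤ dist s p}.Finite := by
    refine (hfin (dist s p + dist p 0)).subset fun y hy => ⟨hy.1, ?_⟩
    simp only [Metric.mem_closedBall]
    calc dist y 0 ≤ dist y p + dist p 0 := dist_triangle _ _ _
      _ ≤ dist s p + dist p 0 := by linarith [hy.2]
  obtain ⟨x, hxT, hmin⟩ := Set.exists_min_image _ (kPhi p) hTfin ⟨s, hs, le_refl _⟩
  refine ⟨x, hxT.1, fun y hy hne => ?_⟩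
  by_cases hyT : y ∈ {y ∈ S | dist y p ≤ dist s p}
  · exact prefPhi_iff.mpr (lt_of_le_of_ne (hmin y hyT) fun h => hne (kPhi_inj h).symm)
  · have : dist s p < dist y p := lt_of_not_ge fun h => hyT ⟨hy, h⟩
    exact Or.inl (lt_of_le_of_lt hxT.2 this)

lemma exists_fav_psi {S : Set (V d)} (hfin : LocFinite S) (hS : S.Nonempty) (x : V d) :
    ∃ p ∈ S, ∀ q ∈ S, q ≠ p → prefPsi x p q := by
  obtain ⟨s, hs⟩ := hS
  have hTfin : {q ∈ S | dist q x ≤ dist s x}.Finite := by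
    refine (hfin (dist s x + dist x 0)).subset fun q hq => ⟨hq.1, ?_⟩
    simp only [Metric.mem_closedBall]
    calc dist q 0 ≤ dist q x + dist x 0 := dist_triangle _ _ _
      _ ≤ dist s x + dist x 0 := by linarith [hq.2]
  obtain ⟨p, hpT, hmin⟩ := Set.exists_min_image _ (kPsi x) hTfin ⟨s, hs, le_refl _⟩
  refine ⟨p, hpT.1, fun q hq hne => ?_⟩
  by_cases hqT : q ∈ {q ∈ S | dist q x ≤ dist s x}
  · exact prefPsi_iff.mpr (lt_of_le_of_ne (hmin q hqT) fun h => hne (kPsi_inj h).symm)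
  · have : dist s x < dist q x := lt_of_not_ge fun h => hqT ⟨hq, h⟩
    exact Or.inl (lt_of_le_of_lt hpT.2 this)

end AuxMNN
section AuxMNN2
variable {d : ℕ} {φ ψ : Set (V d)}

lemma stages_succ_def (n : ℕ) : stages φ ψ (n+1) =
    ((stages φ ψ n).1 \ {p | ∃ x, MutualNN (stages φ ψ n).1 (stages φ ψ n).2 p x},
     (stages φ ψ n).2 \ {x | ∃ p, MutualNN (stages φ ψ n).1 (stages φ ψ n).2 p x}) := rfl

lemma stages_fst_mono : ∀ {m n : ℕ}, m ≤ n → (stages φ ψ n).1 ⊆ (stages φ ψ m).1 := by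
  intro m n h
  induction n with
  | zero => rw [Nat.le_zero.mp h]
  | succ n ih =>
    rcases Nat.lt_or_ge m (n+1) with h' | h'
    · exact fun z hz => ih (Nat.lt_succ_iff.mp h') (Set.diff_subset hz)
    · rw [le_antisymm h h']

lemma stages_snd_mono : ∀ {m n : ℕ}, m ≤ n → (stages φ ψ n).2 ⊆ (stages φ ψ m).2 := by
  intro m n h
  induction n with
  | zero => rw [Nat.le_zero.mp h]
  | succ n ih =>
    rcases Nat.lt_or_ge m (n+1) with h' | h'
    · exact fun z hz => ih (Nat.lt_succ_iff.mp h') (Set.diff_subset hz)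
    · rw [le_antisymm h h']

lemma stages_fst_subset (n : ℕ) : (stages φ ψ n).1 ⊆ φ := stages_fst_mono (Nat.zero_le n)

lemma stages_snd_subset (n : ℕ) : (stages φ ψ n).2 ⊆ ψ := stages_snd_mono (Nat.zero_le n)

lemma mutual_not_mem_fst {n : ℕ} {p x : V d}
    (h : MutualNN (stages φ ψ n).1 (stages φ ψ n).2 p x) : p ∉ (stages φ ψ (n+1)).1 :=
  fun hp => hp.2 ⟨x, h⟩

lemma mutual_not_mem_snd {n : ℕ} {p x : V d}
    (h : MutualNN (stages φ ψ n).1 (stages φ ψ n).2 p x) : x ∉ (stages φ ψ (n+1)).2 :=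
  fun hx => hx.2 ⟨p, h⟩

lemma removed_fst {n : ℕ} {p : V d} (hp : p ∈ φ) (h : p ∉ (stages φ ψ n).1) :
    ∃ m < n, ∃ x, MutualNN (stages φ ψ m).1 (stages φ ψ m).2 p x := by
  induction n with
  | zero => exact absurd hp h
  | succ n ih =>
    by_cases h' : p ∈ (stages φ ψ n).1
    · have : p ∈ {p | ∃ x, MutualNN (stages φ ψ n).1 (stages φ ψ n).2 p x} := by
        by_contra hc; exact h ⟨h', hc⟩
      exact ⟨n, Nat.lt_succ_self n, this⟩
    · obtain ⟨m, hm, hx⟩ := ih h'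
      exact ⟨m, hm.trans (Nat.lt_succ_self n), hx⟩

lemma removed_snd {n : ℕ} {x : V d} (hx : x ∈ ψ) (h : x ∉ (stages φ ψ n).2) :
    ∃ m < n, ∃ p, MutualNN (stages φ ψ m).1 (stages φ ψ m).2 p x := by
  induction n with
  | zero => exact absurd hx h
  | succ n ih =>
    by_cases h' : x ∈ (stages φ ψ n).2
    · have : x ∈ {x | ∃ p, MutualNN (stages φ ψ n).1 (stages φ ψ n).2 p x} := by
        by_contra hc; exact h ⟨h', hc⟩
      exact ⟨n, Nat.lt_succ_self n, this⟩
    · obtain ⟨m, hm, hp⟩ := ih h'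
      exact ⟨m, hm.trans (Nat.lt_succ_self n), hp⟩

lemma mutual_stage_eq {n m : ℕ} {p x p' x' : V d}
    (h1 : MutualNN (stages φ ψ n).1 (stages φ ψ n).2 p x)
    (h2 : MutualNN (stages φ ψ m).1 (stages φ ψ m).2 p' x')
    (hpp : p = p' ∨ x = x') : n = m := by
  by_contra hne
  rcases Nat.lt_or_ge n m with h' | h'
  · rcases hpp with rfl | rfl
    · exact mutual_not_mem_fst h1 (stages_fst_mono h' h2.1)
    · exact mutual_not_mem_snd h1 (stages_snd_mono h' h2.2.1)
  · have h'' : m < n := lt_of_le_of_ne h' (fun h => hne h.symm)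
    rcases hpp with rfl | rfl
    · exact mutual_not_mem_fst h2 (stages_fst_mono h'' h1.1)
    · exact mutual_not_mem_snd h2 (stages_snd_mono h'' h1.2.1)

lemma mutual_match_unique {n m : ℕ} {p x x' : V d}
    (h1 : MutualNN (stages φ ψ n).1 (stages φ ψ n).2 p x)
    (h2 : MutualNN (stages φ ψ m).1 (stages φ ψ m).2 p x') : x = x' := by
  obtain rfl : n = m := mutual_stage_eq h1 h2 (Or.inl rfl)
  by_contra hne
  exact prefPhi_asymm (h1.2.2.1 x' h2.2.1 (fun h => hne h.symm)) (h2.2.2.1 x h1.2.1 hne)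

lemma mutual_partner_unique {n m : ℕ} {p p' x : V d}
    (h1 : MutualNN (stages φ ψ n).1 (stages φ ψ n).2 p x)
    (h2 : MutualNN (stages φ ψ m).1 (stages φ ψ m).2 p' x) : p = p' := by
  obtain rfl : n = m := mutual_stage_eq h1 h2 (Or.inr rfl)
  by_contra hne
  exact prefPsi_asymm (h1.2.2.2 p' h2.1 (fun h => hne h.symm)) (h2.2.2.2 p h1.1 hne)

lemma matchTau_eq_some_iff_phi {p : V d} (hp : p ∈ φ) {x : V d} :
    matchTau φ ψ p = some x ↔ ∃ n, MutualNN (stages φ ψ n).1 (stages φ ψ n).2 p x := by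
  rw [matchTau, if_pos hp]
  by_cases h : ∃ x n, MutualNN (stages φ ψ n).1 (stages φ ψ n).2 p x
  · rw [dif_pos h]
    constructor
    · intro he
      obtain ⟨n, hn⟩ := h.choose_spec
      exact ⟨n, Option.some_injective _ he ▸ hn⟩
    · rintro ⟨n, hn⟩
      obtain ⟨m, hm⟩ := h.choose_spec
      exact congrArg some (mutual_match_unique hm hn)
  · rw [dif_neg h]
    exact ⟨fun he => absurd he (by simp), fun ⟨n, hn⟩ => absurd ⟨x, n, hn⟩ h⟩

lemma matchTau_eq_none_iff_phi {p : V d} (hp : p ∈ φ) :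
    matchTau φ ψ p = none ↔ ∀ x n, ¬ MutualNN (stages φ ψ n).1 (stages φ ψ n).2 p x := by
  rw [matchTau, if_pos hp]
  by_cases h : ∃ x n, MutualNN (stages φ ψ n).1 (stages φ ψ n).2 p x
  · rw [dif_pos h]
    refine ⟨fun he => absurd he (by simp), fun hall => ?_⟩
    obtain ⟨x0, n0, hn0⟩ := h
    exact absurd hn0 (hall x0 n0)
  · rw [dif_neg h]
    exact ⟨fun _ x n hn => h ⟨x, n, hn⟩, fun _ => rfl⟩

lemma matchTau_eq_some_iff_psi {x : V d} (hx : x ∈ ψ) (hx' : x ∉ φ) {p : V d} :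
    matchTau φ ψ x = some p ↔ ∃ n, MutualNN (stages φ ψ n).1 (stages φ ψ n).2 p x := by
  rw [matchTau, if_neg hx', if_pos hx]
  by_cases h : ∃ p n, MutualNN (stages φ ψ n).1 (stages φ ψ n).2 p x
  · rw [dif_pos h]
    constructor
    · intro he
      obtain ⟨n, hn⟩ := h.choose_spec
      exact ⟨n, Option.some_injective _ he ▸ hn⟩
    · rintro ⟨n, hn⟩
      obtain ⟨m, hm⟩ := h.choose_spec
      exact congrArg some (mutual_partner_unique hm hn)
  · rw [dif_neg h]
    constructor
    · intro he; exact absurd he (by simp)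
    · rintro ⟨n, hn⟩; exact absurd ⟨p, n, hn⟩ h

lemma matchTau_eq_none_iff_psi {x : V d} (hx : x ∈ ψ) (hx' : x ∉ φ) :
    matchTau φ ψ x = none ↔ ∀ p n, ¬ MutualNN (stages φ ψ n).1 (stages φ ψ n).2 p x := by
  rw [matchTau, if_neg hx', if_pos hx]
  by_cases h : ∃ p n, MutualNN (stages φ ψ n).1 (stages φ ψ n).2 p x
  · rw [dif_pos h]
    refine ⟨fun he => absurd he (by simp), fun hall => ?_⟩
    obtain ⟨p0, n0, hn0⟩ := h
    exact absurd hn0 (hall p0 n0)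
  · rw [dif_neg h]
    exact ⟨fun _ p n hn => h ⟨p, n, hn⟩, fun _ => rfl⟩

lemma mutualNN_self {z : V d} (hzφ : z ∈ φ) (hzψ : z ∈ ψ) : MutualNN φ ψ z z := by
  refine ⟨hzφ, hzψ, fun y hy hne => Or.inl ?_, fun q hq hne => Or.inl ?_⟩
  · rw [dist_self]; exact dist_pos.mpr hne
  · rw [dist_self]; exact dist_pos.mpr hne

lemma mutualNN_self_stage0 {z : V d} (hzφ : z ∈ φ) (hzψ : z ∈ ψ) :
    MutualNN (stages φ ψ 0).1 (stages φ ψ 0).2 z z := mutualNN_self hzφ hzψ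

lemma matchTau_self {z : V d} (hzφ : z ∈ φ) (hzψ : z ∈ ψ) : matchTau φ ψ z = some z :=
  (matchTau_eq_some_iff_phi hzφ).mpr ⟨0, mutualNN_self_stage0 hzφ hzψ⟩

end AuxMNN2
section AuxMNN3
variable {d : ℕ} {φ ψ : Set (V d)}

lemma matchTau_mem_psi {p x : V d} (hp : p ∈ φ) (h : matchTau φ ψ p = some x) : x ∈ ψ := by
  obtain ⟨n, hn⟩ := (matchTau_eq_some_iff_phi hp).mp h
  exact stages_snd_subset n hn.2.1

lemma matchTau_mem_phi {x p : V d} (hx : x ∈ ψ) (h : matchTau φ ψ x = some p) : p ∈ φ := by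
  by_cases hxφ : x ∈ φ
  · rw [matchTau_self hxφ hx] at h
    exact (Option.some_injective _ h) ▸ hxφ
  · obtain ⟨n, hn⟩ := (matchTau_eq_some_iff_psi hx hxφ).mp h
    exact stages_fst_subset n hn.1

lemma matchTau_symm_iff {p x : V d} (hp : p ∈ φ) (hx : x ∈ ψ) :
    matchTau φ ψ p = some x ↔ matchTau φ ψ x = some p := by
  by_cases hpx : p = x
  · subst hpx; exact Iff.rfl
  by_cases hxφ : x ∈ φ
  · rw [matchTau_self hxφ hx, matchTau_eq_some_iff_phi hp]
    constructor
    · rintro ⟨n, hn⟩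
      exact absurd (mutual_partner_unique hn (mutualNN_self_stage0 hxφ hx)) hpx
    · intro h
      exact absurd (Option.some_injective _ h).symm hpx
  · rw [matchTau_eq_some_iff_phi hp, matchTau_eq_some_iff_psi hx hxφ]

lemma isPartialMatching_matchTau : IsPartialMatching φ ψ (matchTau φ ψ) :=
  ⟨fun p hp x h => matchTau_mem_psi hp h, fun x hx p h => matchTau_mem_phi hx h,
   fun p hp x hx => matchTau_symm_iff hp hx⟩

lemma phiInf_subset : phiInf φ ψ ⊆ φ := fun _ hz => Set.mem_iInter.mp hz 0

lemma psiInf_subset : psiInf φ ψ ⊆ ψ := fun _ hz => Set.mem_iInter.mp hz 0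

lemma no_mutual_inf (hφ : LocFinite φ) (hψ : LocFinite ψ) {p x : V d}
    (h : MutualNN (phiInf φ ψ) (psiInf φ ψ) p x) : False := by
  obtain ⟨hp, hx, hfav1, hfav2⟩ := h
  set S := {y ∈ ψ | ¬ prefPhi p x y ∧ y ≠ x} with hS
  set T := {q ∈ φ | ¬ prefPsi x p q ∧ q ≠ p} with hT
  have hSfin : S.Finite := by
    refine (hψ (dist x p + dist p 0)).subset fun y hy => ⟨hy.1, ?_⟩
    simp only [Metric.mem_closedBall]
    calc dist y 0 ≤ dist y p + dist p 0 := dist_triangle _ _ _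
      _ ≤ dist x p + dist p 0 := by linarith [dist_le_of_not_prefPhi hy.2.1]
  have hTfin : T.Finite := by
    refine (hφ (dist p x + dist x 0)).subset fun q hq => ⟨hq.1, ?_⟩
    simp only [Metric.mem_closedBall]
    calc dist q 0 ≤ dist q x + dist x 0 := dist_triangle _ _ _
      _ ≤ dist p x + dist x 0 := by linarith [dist_le_of_not_prefPsi hq.2.1]
  have hSrm : ∀ y : V d, ∃ n, y ∈ S → y ∉ (stages φ ψ n).2 := by
    intro y
    by_cases hy : y ∈ S
    · have hynotinf : y ∉ psiInf φ ψ := fun hyinf => hy.2.1 (hfav1 y hyinf hy.2.2)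
      have : ∃ n, y ∉ (stages φ ψ n).2 := by
        by_contra hc; push_neg at hc; exact hynotinf (Set.mem_iInter.mpr hc)
      obtain ⟨n, hn⟩ := this; exact ⟨n, fun _ => hn⟩
    · exact ⟨0, fun h => absurd h hy⟩
  have hTrm : ∀ q : V d, ∃ n, q ∈ T → q ∉ (stages φ ψ n).1 := by
    intro q
    by_cases hq : q ∈ T
    · have hqnotinf : q ∉ phiInf φ ψ := fun hqinf => hq.2.1 (hfav2 q hqinf hq.2.2)
      have : ∃ n, q ∉ (stages φ ψ n).1 := by
        by_contra hc; push_neg at hc; exact hqnotinf (Set.mem_iInter.mpr hc)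
      obtain ⟨n, hn⟩ := this; exact ⟨n, fun _ => hn⟩
    · exact ⟨0, fun h => absurd h hq⟩
  choose gS hgS using hSrm
  choose gT hgT using hTrm
  set N := (hSfin.toFinset.sup gS) ⊔ (hTfin.toFinset.sup gT) with hN
  have hmut : MutualNN (stages φ ψ N).1 (stages φ ψ N).2 p x := by
    refine ⟨Set.mem_iInter.mp hp N, Set.mem_iInter.mp hx N, fun y hy hne => ?_,
      fun q hq hne => ?_⟩
    · by_contra hc
      have hyS : y ∈ S := ⟨stages_snd_subset N hy, hc, hne⟩
      exact hgS y hyS (stages_snd_mono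
        (le_trans (Finset.le_sup (hSfin.mem_toFinset.mpr hyS)) le_sup_left) hy)
    · by_contra hc
      have hqT : q ∈ T := ⟨stages_fst_subset N hq, hc, hne⟩
      exact hgT q hqT (stages_fst_mono
        (le_trans (Finset.le_sup (hTfin.mem_toFinset.mpr hqT)) le_sup_right) hq)
  exact mutual_not_mem_fst hmut (Set.mem_iInter.mp hp (N+1))

lemma inf_empty (hφ : LocFinite φ) (hψ : LocFinite ψ)
    (hchain : ¬ ∃ z : ℕ → V d, InfDescChain φ ψ z) :
    phiInf φ ψ = ∅ ∨ psiInf φ ψ = ∅ := by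
  by_contra hc
  push_neg at hc
  obtain ⟨a0, ha0⟩ := hc.1
  obtain ⟨b0, hb0⟩ := hc.2
  have hAfin : LocFinite (phiInf φ ψ) := LocFinite.mono phiInf_subset hφ
  have hBfin : LocFinite (psiInf φ ψ) := LocFinite.mono psiInf_subset hψ
  have hfB : ∀ p : V d, ∃ x ∈ psiInf φ ψ, ∀ y ∈ psiInf φ ψ, y ≠ x → prefPhi p x y :=
    fun p => exists_fav_phi hBfin ⟨b0, hb0⟩ p
  choose fB hfB1 hfB2 using hfB
  have hfA : ∀ x : V d, ∃ q ∈ phiInf φ ψ, ∀ r ∈ phiInf φ ψ, r ≠ q → prefPsi x q r :=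
    fun x => exists_fav_psi hAfin ⟨a0, ha0⟩ x
  choose fA hfA1 hfA2 using hfA
  set z : ℕ → V d := fun n =>
    Nat.rec (motive := fun _ => V d) a0 (fun n zn => if Even n then fB zn else fA zn) n with hzdef
  have hzs : ∀ n, z (n+1) = if Even n then fB (z n) else fA (z n) := fun n => rfl
  have hmem : ∀ n, if Even n then z n ∈ phiInf φ ψ else z n ∈ psiInf φ ψ := by
    intro n
    induction n with
    | zero => exact (if_pos (show Even 0 from ⟨0, rfl⟩)).mpr ha0
    | succ n ih =>
      by_cases hn : Even n
      · have h1 : ¬ Even (n+1) := by simp [Nat.even_add_one, hn]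
        rw [if_neg h1, hzs n, if_pos hn]
        exact hfB1 (z n)
      · have h1 : Even (n+1) := Nat.even_add_one.mpr hn
        rw [if_pos h1, hzs n, if_neg hn]
        exact hfA1 (z n)
  apply hchain
  refine ⟨z, fun i => ?_, fun i hi => ?_⟩
  · by_cases h : Even i
    · rw [if_pos h]
      have := hmem i; rw [if_pos h] at this
      exact phiInf_subset this
    · rw [if_neg h]
      have := hmem i; rw [if_neg h] at this
      exact psiInf_subset this
  · obtain ⟨m, rfl⟩ : ∃ m, i = m + 1 := ⟨i - 1, (Nat.succ_pred_eq_of_pos hi).symm⟩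
    simp only [Nat.add_sub_cancel]
    by_cases hm : Even m
    · have hiodd : ¬ Even (m+1) := by simp [Nat.even_add_one, hm]
      rw [if_neg hiodd]
      have h1 : z (m+1) = fB (z m) := by rw [hzs m, if_pos hm]
      have h2 : z (m+2) = fA (z (m+1)) := by rw [hzs (m+1), if_neg hiodd]
      have hzm : z m ∈ phiInf φ ψ := by have := hmem m; rwa [if_pos hm] at this
      have hne : z m ≠ fA (z (m+1)) := by
        intro he
        refine no_mutual_inf hφ hψ (p := z m) (x := z (m+1))
          ⟨hzm, ?_, ?_, ?_⟩
        · rw [h1]; exact hfB1 (z m)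
        · rw [h1]; exact hfB2 (z m)
        · rw [he]; exact hfA2 (z (m+1))
      rw [h2]
      exact hfA2 (z (m+1)) (z m) hzm hne
    · have hieven : Even (m+1) := Nat.even_add_one.mpr hm
      rw [if_pos hieven]
      have h1 : z (m+1) = fA (z m) := by rw [hzs m, if_neg hm]
      have h2 : z (m+2) = fB (z (m+1)) := by rw [hzs (m+1), if_pos hieven]
      have hzm : z m ∈ psiInf φ ψ := by have := hmem m; rwa [if_neg hm] at this
      have hz1 : z (m+1) ∈ phiInf φ ψ := by have := hmem (m+1); rwa [if_pos hieven] at this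
      have hne : z m ≠ fB (z (m+1)) := by
        intro he
        refine no_mutual_inf hφ hψ (p := z (m+1)) (x := z m) ⟨hz1, hzm, ?_, ?_⟩
        · rw [he]; exact hfB2 (z (m+1))
        · rw [h1]; exact hfA2 (z m)
      rw [h2]
      exact hfB2 (z (m+1)) (z m) hzm hne

end AuxMNN3
section AuxMNN5
variable {d : ℕ} {φ ψ : Set (V d)}

lemma matchTau_of_mutual_psi {m : ℕ} {q x : V d} (hx : x ∈ ψ)
    (h : MutualNN (stages φ ψ m).1 (stages φ ψ m).2 q x) : matchTau φ ψ x = some q := by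
  by_cases hxφ : x ∈ φ
  · have he : q = x := mutual_partner_unique h (mutualNN_self_stage0 hxφ hx)
    rw [matchTau_self hxφ hx, he]
  · exact (matchTau_eq_some_iff_psi hx hxφ).mpr ⟨m, h⟩

lemma isStableMatching_matchTau (hφ : LocFinite φ) (hψ : LocFinite ψ)
    (hchain : ¬ ∃ z : ℕ → V d, InfDescChain φ ψ z) :
    IsStableMatching φ ψ (matchTau φ ψ) := by
  refine ⟨isPartialMatching_matchTau, ?_⟩
  rintro ⟨p, hp, x, hx, hpsx, hphx⟩
  have hpx : p ≠ x := by
    rintro rfl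
    rw [matchTau_self hp hx] at hphx
    exact prefPhi_irrefl hphx
  by_cases hpstage : ∀ n, p ∈ (stages φ ψ n).1
  · by_cases hxstage : ∀ n, x ∈ (stages φ ψ n).2
    · rcases inf_empty hφ hψ hchain with h | h
      · exact (h ▸ Set.notMem_empty p) (Set.mem_iInter.mpr hpstage)
      · exact (h ▸ Set.notMem_empty x) (Set.mem_iInter.mpr hxstage)
    · push_neg at hxstage
      obtain ⟨n0, hn0⟩ := hxstage
      obtain ⟨m, _, q, hmut⟩ := removed_snd hx hn0
      rw [matchTau_of_mutual_psi hx hmut] at hpsx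
      have hpsx' : prefPsi x p q := hpsx
      have hq : q ≠ p := fun he => prefPsi_irrefl (he ▸ hpsx')
      exact prefPsi_asymm hpsx' (hmut.2.2.2 p (hpstage m) (fun he => hq he.symm))
  · push_neg at hpstage
    obtain ⟨n0, hn0⟩ := hpstage
    obtain ⟨n, _, y, hmut⟩ := removed_fst hp hn0
    rw [(matchTau_eq_some_iff_phi hp).mpr ⟨n, hmut⟩] at hphx
    have hphx' : prefPhi p x y := hphx
    have hxy : x ≠ y := fun he => prefPhi_irrefl (he ▸ hphx')
    by_cases hxn : x ∈ (stages φ ψ n).2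
    · exact prefPhi_asymm hphx' (hmut.2.2.1 x hxn hxy)
    · obtain ⟨m, hmn, q, hmut'⟩ := removed_snd hx hxn
      rw [matchTau_of_mutual_psi hx hmut'] at hpsx
      have hpsx' : prefPsi x p q := hpsx
      have hq : q ≠ p := fun he => prefPsi_irrefl (he ▸ hpsx')
      have hpm : p ∈ (stages φ ψ m).1 := stages_fst_mono (le_of_lt hmn) hmut.1
      exact prefPsi_asymm hpsx' (hmut'.2.2.2 p hpm (fun he => hq he.symm))

lemma stable_matches_mutual {t : V d → Option (V d)} (ht : IsStableMatching φ ψ t) :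
    ∀ n, ∀ p x, MutualNN (stages φ ψ n).1 (stages φ ψ n).2 p x →
      t p = some x ∧ t x = some p := by
  obtain ⟨⟨h1, h2, h3⟩, hstab⟩ := ht
  intro n
  induction n using Nat.strong_induction_on with
  | _ n ih =>
    intro p x hmut
    have hp : p ∈ φ := stages_fst_subset n hmut.1
    have hx : x ∈ ψ := stages_snd_subset n hmut.2.1
    have key : t p = some x := by
      by_contra hne
      apply hstab
      refine ⟨p, hp, x, hx, ?_, ?_⟩
      · cases htx : t x with
        | none => trivial
        | some q =>
          have hqφ : q ∈ φ := h2 x hx q htx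
          have hqp : q ≠ p := by
            rintro rfl
            exact hne ((h3 q hp x hx).mpr htx)
          have hqn : q ∈ (stages φ ψ n).1 := by
            by_contra hqn
            obtain ⟨m, hmn, y', hmut'⟩ := removed_fst hqφ hqn
            have h4 := (ih m hmn q y' hmut').1
            have h5 : t q = some x := (h3 q hqφ x hx).mpr htx
            have hxy' : y' = x := Option.some_injective _ (h4.symm.trans h5)
            exact mutual_not_mem_snd hmut'
              (hxy' ▸ stages_snd_mono (Nat.succ_le_of_lt hmn) hmut.2.1)
          show prefPsi x p q
          exact hmut.2.2.2 q hqn hqp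
      · cases htp : t p with
        | none => trivial
        | some y =>
          have hyψ : y ∈ ψ := h1 p hp y htp
          have hyx : y ≠ x := fun he => hne (he ▸ htp)
          have hyn : y ∈ (stages φ ψ n).2 := by
            by_contra hyn
            obtain ⟨m, hmn, q', hmut'⟩ := removed_snd hyψ hyn
            have h4 := (ih m hmn q' y hmut').2
            have h5 : t y = some p := (h3 p hp y hyψ).mp htp
            have hqp' : q' = p := Option.some_injective _ (h4.symm.trans h5)
            exact mutual_not_mem_fst hmut'
              (hqp' ▸ stages_fst_mono (Nat.succ_le_of_lt hmn) hmut.1)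
          show prefPhi p x y
          exact hmut.2.2.1 y hyn hyx
    exact ⟨key, (h3 p hp x hx).mp key⟩

lemma stable_unique (hφ : LocFinite φ) (hψ : LocFinite ψ)
    (hchain : ¬ ∃ z : ℕ → V d, InfDescChain φ ψ z)
    {t : V d → Option (V d)} (ht : IsStableMatching φ ψ t) :
    ∀ z ∈ φ ∪ ψ, t z = matchTau φ ψ z := by
  have hkey := stable_matches_mutual ht
  obtain ⟨⟨h1, h2, h3⟩, _⟩ := ht
  intro z hz
  by_cases hzφ : z ∈ φ
  · cases hmz : matchTau φ ψ z with
    | some x =>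
      obtain ⟨n, hn⟩ := (matchTau_eq_some_iff_phi hzφ).mp hmz
      exact (hkey n z x hn).1
    | none =>
      have hzinf : z ∈ phiInf φ ψ := by
        refine Set.mem_iInter.mpr fun n => ?_
        by_contra hc
        obtain ⟨m, _, x, hmut⟩ := removed_fst hzφ hc
        exact (matchTau_eq_none_iff_phi hzφ).mp hmz x m hmut
      have hpsiempty : psiInf φ ψ = ∅ := by
        rcases inf_empty hφ hψ hchain with h | h
        · exact absurd hzinf (h ▸ Set.notMem_empty z)
        · exact h
      cases htz : t z with
      | none => rfl
      | some x =>
        exfalso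
        have hxψ : x ∈ ψ := h1 z hzφ x htz
        have hxnot : x ∉ psiInf φ ψ := hpsiempty ▸ Set.notMem_empty x
        obtain ⟨n, hn⟩ : ∃ n, x ∉ (stages φ ψ n).2 := by
          by_contra hc; push_neg at hc; exact hxnot (Set.mem_iInter.mpr hc)
        obtain ⟨m, _, q, hmut⟩ := removed_snd hxψ hn
        have h4 := (hkey m q x hmut).2
        have h5 : t x = some z := (h3 z hzφ x hxψ).mp htz
        obtain rfl : q = z := Option.some_injective _ (h4.symm.trans h5)
        exact mutual_not_mem_fst hmut (Set.mem_iInter.mp hzinf (m+1))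
  · have hzψ : z ∈ ψ := hz.resolve_left hzφ
    cases hmz : matchTau φ ψ z with
    | some p =>
      obtain ⟨n, hn⟩ := (matchTau_eq_some_iff_psi hzψ hzφ).mp hmz
      exact (hkey n p z hn).2
    | none =>
      have hzinf : z ∈ psiInf φ ψ := by
        refine Set.mem_iInter.mpr fun n => ?_
        by_contra hc
        obtain ⟨m, _, p, hmut⟩ := removed_snd hzψ hc
        exact (matchTau_eq_none_iff_psi hzψ hzφ).mp hmz p m hmut
      have hphiempty : phiInf φ ψ = ∅ := by
        rcases inf_empty hφ hψ hchain with h | h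
        · exact h
        · exact absurd hzinf (h ▸ Set.notMem_empty z)
      cases htz : t z with
      | none => rfl
      | some p =>
        exfalso
        have hpφ : p ∈ φ := h2 z hzψ p htz
        have hpnot : p ∉ phiInf φ ψ := hphiempty ▸ Set.notMem_empty p
        obtain ⟨n, hn⟩ : ∃ n, p ∉ (stages φ ψ n).1 := by
          by_contra hc; push_neg at hc; exact hpnot (Set.mem_iInter.mpr hc)
        obtain ⟨m, _, y, hmut⟩ := removed_fst hpφ hn
        have h4 := (hkey m p y hmut).1
        have h5 : t p = some z := (h3 p hpφ z hzψ).mpr htz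
        obtain rfl : y = z := Option.some_injective _ (h4.symm.trans h5)
        exact mutual_not_mem_snd hmut (Set.mem_iInter.mp hzinf (m+1))

end AuxMNN5

/-- If `(φ, ψ)` contains no infinite descending chain, then `φ_∞ = ∅` or
`ψ_∞ = ∅`, and there is a unique stable partial matching from `φ` to `ψ`, namely the mutual
nearest neighbour matching. -/
theorem statement1 (d : ℕ) (φ ψ : Set (V d))
    (hφ : LocFinite φ) (hψ : LocFinite ψ)
    (hchain : ¬ ∃ z : ℕ → V d, InfDescChain φ ψ z) :
    (phiInf φ ψ = ∅ ∨ psiInf φ ψ = ∅) ∧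
    IsStableMatching φ ψ (matchTau φ ψ) ∧
    ∀ t : V d → Option (V d), IsStableMatching φ ψ t →
      ∀ z ∈ φ ∪ ψ, t z = matchTau φ ψ z :=
  ⟨inf_empty hφ hψ hchain, isStableMatching_matchTau hφ hψ hchain,
    fun _ ht z hz => stable_unique hφ hψ hchain ht z hz⟩

end
end

section
/- Let φ, ψ be locally finite subsets of ℝ^d, let W ⊆ ℝ^d and let z ∈ W; write φ^z := φ ∪ {z}. Then the matching flower satisfies F(φ^z, ψ, z) ⊆ W if and only if F(φ^z ∩ W, ψ ∩ W, z) ⊆ W, and in this case the matching partners agree: τ(φ^z, ψ, z) = τ(φ^z ∩ W, ψ ∩ W, z). The analogous statement holds when z is added to the second configuration, i.e. with ψ^z := ψ ∪ {z}: F(φ, ψ^z, z) ⊆ W iff F(φ ∩ W, ψ^z ∩ W, z) ⊆ W, and then τ(φ, ψ^z, z) = τ(φ ∩ W, ψ^z ∩ W, z). -/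
open MeasureTheory Set Metric
open scoped ENNReal ENat NNReal Pointwise

noncomputable section

variable {d : ℕ}

section Aux

variable {d : ℕ}

theorem lexLT_irrefl (x : V d) : ¬ lexLT x x := by
  rintro ⟨i, hi, -⟩; exact lt_irrefl _ hi

theorem lexLT_asymm {x y : V d} (h : lexLT x y) : ¬ lexLT y x := by
  rintro ⟨j, hj, hj'⟩
  obtain ⟨i, hi, hi'⟩ := h
  rcases lt_trichotomy i j with hij | hij | hij
  · exact absurd (hj' i hij).symm (ne_of_lt hi)
  · subst hij; exact lt_irrefl _ (hi.trans hj)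
  · exact absurd (hi' j hij) (ne_of_gt hj)

theorem lexLT_trans {x y z : V d} (h1 : lexLT x y) (h2 : lexLT y z) : lexLT x z := by
  obtain ⟨i, hi, hi'⟩ := h1
  obtain ⟨j, hj, hj'⟩ := h2
  rcases lt_trichotomy i j with hij | hij | hij
  · exact ⟨i, (hj' i hij) ▸ hi, fun k hk => (hi' k hk).trans (hj' k (hk.trans hij))⟩
  · subst hij; exact ⟨i, hi.trans hj, fun k hk => (hi' k hk).trans (hj' k hk)⟩
  · exact ⟨j, by rw [hi' j hij]; exact ⟨hj, fun k hk => (hi' k (hk.trans hij)).trans (hj' k hk)⟩⟩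

theorem lexLT_total {x y : V d} (h : x ≠ y) : lexLT x y ∨ lexLT y x := by
  have hne : {i : Fin d | x i ≠ y i}.Nonempty := by
    by_contra hc
    rw [Set.not_nonempty_iff_eq_empty] at hc
    exact h (PiLp.ext fun i => by_contra fun hh =>
      (Set.eq_empty_iff_forall_notMem.mp hc i hh))
  have hfin : {i : Fin d | x i ≠ y i}.Finite := Set.toFinite _
  obtain ⟨i, hi, hmin⟩ := Set.Finite.exists_minimalFor id _ hfin hne
  have hbelow : ∀ j : Fin d, j < i → x j = y j := by
    intro j hj
    by_contra hc
    exact absurd (hmin hc (le_of_lt hj)) (not_le_of_gt hj)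
  rcases lt_or_gt_of_ne (hi : x i ≠ y i) with hlt | hgt
  · exact Or.inl ⟨i, hlt, hbelow⟩
  · exact Or.inr ⟨i, hgt, fun j hj => (hbelow j hj).symm⟩

/-- Axioms satisfied by the preference relations. -/
structure PrefAx (A : V d → V d → V d → Prop) : Prop where
  asymm : ∀ p x y, A p x y → ¬ A p y x
  trans : ∀ p x y t, A p x y → A p y t → A p x t
  total : ∀ p x y, x ≠ y → A p x y ∨ A p y x
  dist_le : ∀ p x y, A p x y → dist x p ≤ dist y p

theorem prefAx_prefPhi : PrefAx (d := d) prefPhi := by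
  constructor
  · rintro p x y (h | ⟨he, hl⟩) (h' | ⟨he', hl'⟩)
    · exact absurd h' (not_lt_of_gt h)
    · exact absurd h (by rw [he']; exact lt_irrefl _)
    · exact absurd h' (by rw [he]; exact lt_irrefl _)
    · exact lexLT_asymm hl hl'
  · rintro p x y t (h | ⟨he, hl⟩) (h' | ⟨he', hl'⟩)
    · exact Or.inl (h.trans h')
    · exact Or.inl (he' ▸ h)
    · exact Or.inl (he ▸ h')
    · exact Or.inr ⟨he.trans he', lexLT_trans hl hl'⟩
  · intro p x y h
    rcases lt_trichotomy (dist x p) (dist y p) with hd | hd | hd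
    · exact Or.inl (Or.inl hd)
    · rcases lexLT_total h with hl | hl
      · exact Or.inl (Or.inr ⟨hd, hl⟩)
      · exact Or.inr (Or.inr ⟨hd.symm, hl⟩)
    · exact Or.inr (Or.inl hd)
  · rintro p x y (h | ⟨he, -⟩)
    · exact le_of_lt h
    · exact le_of_eq he

theorem prefAx_prefPsi : PrefAx (d := d) prefPsi := by
  constructor
  · rintro p x y (h | ⟨he, hl⟩) (h' | ⟨he', hl'⟩)
    · exact absurd h' (not_lt_of_gt h)
    · exact absurd h (by rw [he']; exact lt_irrefl _)
    · exact absurd h' (by rw [he]; exact lt_irrefl _)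
    · exact lexLT_asymm hl hl'
  · rintro p x y t (h | ⟨he, hl⟩) (h' | ⟨he', hl'⟩)
    · exact Or.inl (h.trans h')
    · exact Or.inl (he' ▸ h)
    · exact Or.inl (he ▸ h')
    · exact Or.inr ⟨he.trans he', lexLT_trans hl' hl⟩
  · intro p x y h
    rcases lt_trichotomy (dist x p) (dist y p) with hd | hd | hd
    · exact Or.inl (Or.inl hd)
    · rcases lexLT_total h with hl | hl
      · exact Or.inr (Or.inr ⟨hd.symm, hl⟩)
      · exact Or.inl (Or.inr ⟨hd, hl⟩)
    · exact Or.inr (Or.inl hd)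
  · rintro p x y (h | ⟨he, -⟩)
    · exact le_of_lt h
    · exact le_of_eq he

end Aux
section Gen

variable {d : ℕ}

/-- Generic mutual-nearest-neighbour condition for preference relations `A`, `B`. -/
def genMutualNN (A B : V d → V d → V d → Prop) (α β : Set (V d)) (p x : V d) : Prop :=
  p ∈ α ∧ x ∈ β ∧ (∀ y ∈ β, y ≠ x → A p x y) ∧ (∀ q ∈ α, q ≠ p → B x p q)

/-- Generic matching stages. -/
def genStages (A B : V d → V d → V d → Prop) (α β : Set (V d)) : ℕ → Set (V d) × Set (V d)
  | 0 => (α, β)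
  | n + 1 =>
      let s := genStages A B α β n
      (s.1 \ {p | ∃ x, genMutualNN A B s.1 s.2 p x},
       s.2 \ {x | ∃ p, genMutualNN A B s.1 s.2 p x})

/-- Generic descending chain. -/
def genDescChain (A B : V d → V d → V d → Prop) (α β : Set (V d)) (n : ℕ) (c : ℕ → V d) : Prop :=
  2 ≤ n ∧ (∀ i < n, if Even i then c i ∈ α else c i ∈ β) ∧
    ∀ i, 1 ≤ i → i + 1 < n →
      (if Even i then A (c i) (c (i + 1)) (c (i - 1))
       else B (c i) (c (i + 1)) (c (i - 1)))

theorem genMutualNN_phi (φ ψ : Set (V d)) : genMutualNN prefPhi prefPsi φ ψ = MutualNN φ ψ := rfl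

theorem genDescChain_phi (φ ψ : Set (V d)) :
    genDescChain prefPhi prefPsi φ ψ = DescChain φ ψ := rfl

theorem genDescChain_psi (φ ψ : Set (V d)) :
    genDescChain prefPsi prefPhi ψ φ = DescChainPsiStart φ ψ := rfl

theorem genStages_phi (φ ψ : Set (V d)) (n : ℕ) :
    genStages prefPhi prefPsi φ ψ n = stages φ ψ n := by
  induction n with
  | zero => rfl
  | succ n ih => simp only [genStages, stages, ih, genMutualNN_phi]

theorem mutualNN_swap (φ ψ : Set (V d)) (p x : V d) :
    genMutualNN prefPsi prefPhi ψ φ x p ↔ MutualNN φ ψ p x := by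
  unfold genMutualNN MutualNN; tauto

theorem genStages_psi (φ ψ : Set (V d)) (n : ℕ) :
    genStages prefPsi prefPhi ψ φ n = ((stages φ ψ n).2, (stages φ ψ n).1) := by
  induction n with
  | zero => rfl
  | succ n ih =>
      simp only [genStages, stages, ih]
      congr 1
      · congr 1
        ext x
        simp only [Set.mem_setOf_eq]
        exact exists_congr fun p => mutualNN_swap _ _ p x
      · congr 1
        ext p
        simp only [Set.mem_setOf_eq]
        exact exists_congr fun x => mutualNN_swap _ _ p x

variable (A B : V d → V d → V d → Prop) (α β : Set (V d))

theorem genStages_succ_fst (n : ℕ) :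
    (genStages A B α β (n + 1)).1 = (genStages A B α β n).1 \
      {p | ∃ x, genMutualNN A B (genStages A B α β n).1 (genStages A B α β n).2 p x} := rfl

theorem genStages_succ_snd (n : ℕ) :
    (genStages A B α β (n + 1)).2 = (genStages A B α β n).2 \
      {x | ∃ p, genMutualNN A B (genStages A B α β n).1 (genStages A B α β n).2 p x} := rfl

theorem genStages_anti_fst {m n : ℕ} (h : m ≤ n) :
    (genStages A B α β n).1 ⊆ (genStages A B α β m).1 := by
  induction n with
  | zero => simp_all
  | succ n ih =>
      rcases Nat.lt_or_ge m (n + 1) with hm | hm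
      · exact (Set.diff_subset).trans (ih (Nat.lt_succ_iff.mp hm))
      · have : m = n + 1 := le_antisymm h hm
        subst this; exact subset_rfl

theorem genStages_anti_snd {m n : ℕ} (h : m ≤ n) :
    (genStages A B α β n).2 ⊆ (genStages A B α β m).2 := by
  induction n with
  | zero => simp_all
  | succ n ih =>
      rcases Nat.lt_or_ge m (n + 1) with hm | hm
      · exact (Set.diff_subset).trans (ih (Nat.lt_succ_iff.mp hm))
      · have : m = n + 1 := le_antisymm h hm
        subst this; exact subset_rfl

theorem genStages_fst_subset (n : ℕ) : (genStages A B α β n).1 ⊆ α :=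
  genStages_anti_fst A B α β (Nat.zero_le n)

theorem genStages_snd_subset (n : ℕ) : (genStages A B α β n).2 ⊆ β :=
  genStages_anti_snd A B α β (Nat.zero_le n)

theorem gen_not_mem_succ_fst {n : ℕ} {u v : V d}
    (h : genMutualNN A B (genStages A B α β n).1 (genStages A B α β n).2 u v) :
    u ∉ (genStages A B α β (n + 1)).1 := by
  rw [genStages_succ_fst]
  exact fun hc => hc.2 ⟨v, h⟩

theorem gen_not_mem_succ_snd {n : ℕ} {u v : V d}
    (h : genMutualNN A B (genStages A B α β n).1 (genStages A B α β n).2 u v) :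
    v ∉ (genStages A B α β (n + 1)).2 := by
  rw [genStages_succ_snd]
  exact fun hc => hc.2 ⟨u, h⟩

theorem genRemoved_fst {n : ℕ} {u : V d} (hu : u ∈ α) (h : u ∉ (genStages A B α β n).1) :
    ∃ k < n, u ∈ (genStages A B α β k).1 ∧
      ∃ v, genMutualNN A B (genStages A B α β k).1 (genStages A B α β k).2 u v := by
  induction n with
  | zero => exact absurd hu h
  | succ n ih =>
      by_cases hn : u ∈ (genStages A B α β n).1
      · refine ⟨n, Nat.lt_succ_self n, hn, ?_⟩
        by_contra hc
        exact h (by rw [genStages_succ_fst]; exact ⟨hn, hc⟩)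
      · obtain ⟨k, hk, h1, h2⟩ := ih hn
        exact ⟨k, hk.trans (Nat.lt_succ_self n), h1, h2⟩

theorem genRemoved_snd {n : ℕ} {v : V d} (hv : v ∈ β) (h : v ∉ (genStages A B α β n).2) :
    ∃ k < n, v ∈ (genStages A B α β k).2 ∧
      ∃ u, genMutualNN A B (genStages A B α β k).1 (genStages A B α β k).2 u v := by
  induction n with
  | zero => exact absurd hv h
  | succ n ih =>
      by_cases hn : v ∈ (genStages A B α β n).2
      · refine ⟨n, Nat.lt_succ_self n, hn, ?_⟩
        by_contra hc
        exact h (by rw [genStages_succ_snd]; exact ⟨hn, hc⟩)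
      · obtain ⟨k, hk, h1, h2⟩ := ih hn
        exact ⟨k, hk.trans (Nat.lt_succ_self n), h1, h2⟩

/-- The partner of a point of `α` in the matching is unique (over all stages). -/
theorem genUnique (hA : PrefAx A) {n n' : ℕ} {z x x' : V d}
    (h : genMutualNN A B (genStages A B α β n).1 (genStages A B α β n).2 z x)
    (h' : genMutualNN A B (genStages A B α β n').1 (genStages A B α β n').2 z x') :
    x = x' := by
  rcases lt_trichotomy n n' with hn | hn | hn
  · exact absurd (genStages_anti_fst A B α β hn h'.1) (gen_not_mem_succ_fst A B α β h)
  · subst hn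
    by_contra hne
    have h1 := h.2.2.1 x' h'.2.1 (Ne.symm hne)
    have h2 := h'.2.2.1 x h.2.1 hne
    exact hA.asymm z x x' h1 h2
  · exact absurd (genStages_anti_fst A B α β hn h.1) (gen_not_mem_succ_fst A B α β h')

end Gen
section Chains

variable {d : ℕ}
variable (A B : V d → V d → V d → Prop) (α β : Set (V d)) (z w : V d)

/-- Generic competing chain for `z` (with matching partner `w`). -/
def genCC (n : ℕ) (c : ℕ → V d) : Prop :=
  genDescChain A B α β n c ∧ c 0 = z ∧ (c 1 = w ∨ A z (c 1) w)

/-- Generic matching flower of a matched point `z` with partner `w`. -/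
def genF : Set (V d) :=
  ⋃ (n : ℕ) (c : ℕ → V d) (_ : genCC A B α β z w n c), chainBalls n c

variable {A B α β z w}

theorem chainBalls_subset_genF {n : ℕ} {c : ℕ → V d} (h : genCC A B α β z w n c) :
    chainBalls n c ⊆ genF A B α β z w := by
  intro x hx
  exact Set.mem_iUnion.mpr ⟨n, Set.mem_iUnion.mpr ⟨c, Set.mem_iUnion.mpr ⟨h, hx⟩⟩⟩

theorem ball0_subset_genF {n : ℕ} {c : ℕ → V d} (h : genCC A B α β z w n c) :
    closedBall (c 0) (dist (c 1) (c 0)) ⊆ genF A B α β z w :=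
  fun x hx => chainBalls_subset_genF h (Or.inl hx)

theorem ball_subset_genF {n : ℕ} {c : ℕ → V d} (h : genCC A B α β z w n c)
    {i : ℕ} (h1 : 1 ≤ i) (h2 : i < n) :
    closedBall (c i) (dist (c i) (c (i - 1))) ⊆ genF A B α β z w := by
  intro x hx
  refine chainBalls_subset_genF h (Or.inr ?_)
  exact Set.mem_biUnion (Finset.mem_Ico.mpr ⟨h1, h2⟩) hx

theorem point_mem_genF {n : ℕ} {c : ℕ → V d} (h : genCC A B α β z w n c)
    {i : ℕ} (hi : i < n) : c i ∈ genF A B α β z w := by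
  rcases Nat.eq_zero_or_pos i with rfl | hpos
  · exact ball0_subset_genF h (mem_closedBall_self dist_nonneg)
  · exact ball_subset_genF h hpos hi (mem_closedBall_self dist_nonneg)

theorem genCC_two (hz : z ∈ α) {x : V d} (hx : x ∈ β) (hcomp : x = w ∨ A z x w) :
    genCC A B α β z w 2 (fun j => if j = 0 then z else x) := by
  refine ⟨⟨le_refl 2, ?_, ?_⟩, by simp, by simpa using hcomp⟩
  · intro i hi
    interval_cases i
    · simpa using hz
    · simpa [Nat.not_even_one] using hx
  · intro i h1 h2; omega

theorem genCC_three (hz : z ∈ α) {v q : V d} (hv : v ∈ β) (hq : q ∈ α)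
    (hcomp : v = w ∨ A z v w) (hpref : B v q z) :
    genCC A B α β z w 3 (fun j => if j = 0 then z else if j = 1 then v else q) := by
  refine ⟨⟨by norm_num, ?_, ?_⟩, by simp, by simpa using hcomp⟩
  · intro i hi
    interval_cases i
    · simpa using hz
    · simpa [Nat.not_even_one] using hv
    · simpa [Nat.even_iff] using hq
  · intro i h1 h2
    have : i = 1 := by omega
    subst this
    simpa [Nat.not_even_one] using hpref

theorem genCC_extend {m : ℕ} {c : ℕ → V d} (h : genCC A B α β z w m c) {y : V d}
    (hy : if Even m then y ∈ α else y ∈ β)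
    (hpref : if Even (m - 1) then A (c (m - 1)) y (c (m - 2))
             else B (c (m - 1)) y (c (m - 2))) :
    genCC A B α β z w (m + 1) (fun j => if j < m then c j else y) := by
  obtain ⟨⟨hm2, hmem, hpr⟩, h0, hcomp⟩ := h
  refine ⟨⟨by omega, ?_, ?_⟩, ?_, ?_⟩
  · intro i hi
    rcases Nat.lt_or_ge i m with him | him
    · simpa [him] using hmem i him
    · have : i = m := by omega
      subst this
      simpa [lt_irrefl] using hy
  · intro i h1 h2
    rcases Nat.lt_or_ge (i + 1) m with him | him
    · have e1 : i < m := by omega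
      have e2 : i - 1 < m := by omega
      have := hpr i h1 him
      split at this <;> rename_i hev
      · simpa [him, e1, e2, hev] using this
      · simpa [him, e1, e2, hev] using this
    · have : i = m - 1 := by omega
      subst this
      have e1 : m - 1 < m := by omega
      have e2 : m - 1 - 1 < m := by omega
      have e3 : m - 1 + 1 = m := by omega
      have e4 : m - 1 - 1 = m - 2 := by omega
      have e5 : 0 < m := by omega
      split at hpref <;> rename_i hev
      · simpa [e1, e2, e3, e4, e5, hev, lt_irrefl] using hpref
      · simpa [e1, e2, e3, e4, e5, hev, lt_irrefl] using hpref
  · have : (0 : ℕ) < m := by omega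
    simpa [this] using h0
  · have : (1 : ℕ) < m := by omega
    simpa [this] using hcomp

theorem genCC_trunc {m : ℕ} {c : ℕ → V d} (h : genCC A B α β z w m c) {j : ℕ}
    (h2 : 2 ≤ j) (hj : j ≤ m) : genCC A B α β z w j c := by
  obtain ⟨⟨hm2, hmem, hpr⟩, h0, hcomp⟩ := h
  exact ⟨⟨h2, fun i hi => hmem i (lt_of_lt_of_le hi hj),
    fun i h1 hi => hpr i h1 (lt_of_lt_of_le hi hj)⟩, h0, hcomp⟩

end Chains
section Gadgets

variable {d : ℕ}
variable (A B : V d → V d → V d → Prop) (α β : Set (V d)) (z w : V d)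

/-- Extension gadget for a point `u` on the first-configuration side of a competing chain,
with bound `x`. -/
def ExtChainA (u x : V d) : Prop :=
  x ∈ genF A B α β z w ∧ closedBall u (dist u x) ⊆ genF A B α β z w ∧
    ∀ y ∈ β, A u y x → ∃ m c, genCC A B α β z w m c ∧ Even m ∧ c (m - 1) = y ∧ c (m - 2) = u

/-- Extension gadget for a point `v` on the second-configuration side of a competing chain,
with bound `p`. -/
def ExtChainB (v p : V d) : Prop :=
  p ∈ genF A B α β z w ∧ closedBall v (dist v p) ⊆ genF A B α β z w ∧
    ∀ q ∈ α, B v q p → ∃ m c, genCC A B α β z w m c ∧ Odd m ∧ c (m - 1) = q ∧ c (m - 2) = v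

variable {A B α β z w}

theorem gadget_of_chain_A {m : ℕ} {c : ℕ → V d} {u x : V d}
    (hcc : genCC A B α β z w m c) (hodd : Odd m) (h1 : c (m - 1) = u) (h2 : c (m - 2) = x) :
    ExtChainA A B α β z w u x := by
  have hm2 : 2 ≤ m := hcc.1.1
  have hm3 : 3 ≤ m := by
    have := Nat.odd_iff.mp hodd; omega
  refine ⟨h2 ▸ point_mem_genF hcc (by omega), ?_, ?_⟩
  · have hsub := ball_subset_genF hcc (i := m - 1) (by omega) (by omega)
    rw [h1, (by omega : m - 1 - 1 = m - 2), h2] at hsub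
    exact hsub
  · intro y hy hAyx
    have hevm1 : Even (m - 1) := Nat.Odd.sub_odd hodd odd_one
    have hext := genCC_extend hcc (y := y)
      (by rw [if_neg (by simpa using hodd)]; exact hy)
      (by rw [if_pos hevm1, h1, h2]; exact hAyx)
    refine ⟨m + 1, _, hext, Odd.add_one hodd, ?_, ?_⟩
    · simp [lt_irrefl]
    · rw [(by omega : m + 1 - 2 = m - 1)]
      rw [if_pos (by omega : m - 1 < m)]
      exact h1

theorem gadget_of_chain_B {m : ℕ} {c : ℕ → V d} {v p : V d}
    (hcc : genCC A B α β z w m c) (hev : Even m) (h1 : c (m - 1) = v) (h2 : c (m - 2) = p) :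
    ExtChainB A B α β z w v p := by
  have hm2 : 2 ≤ m := hcc.1.1
  refine ⟨h2 ▸ point_mem_genF hcc (by omega), ?_, ?_⟩
  · have hsub := ball_subset_genF hcc (i := m - 1) (by omega) (by omega)
    rw [h1, (by omega : m - 1 - 1 = m - 2), h2] at hsub
    exact hsub
  · intro q hq hBqp
    have hoddm1 : Odd (m - 1) := Nat.Even.sub_odd (by omega) hev odd_one
    have hext := genCC_extend hcc (y := q)
      (by rw [if_pos hev]; exact hq)
      (by rw [if_neg (by simpa using hoddm1), h1, h2]; exact hBqp)
    refine ⟨m + 1, _, hext, Even.add_one hev, ?_, ?_⟩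
    · simp [lt_irrefl]
    · rw [(by omega : m + 1 - 2 = m - 1)]
      rw [if_pos (by omega : m - 1 < m)]
      exact h1

theorem extChainA_root (hz : z ∈ α) (hw : w ∈ β) : ExtChainA A B α β z w z w := by
  have hcc := genCC_two (A := A) (B := B) (w := w) hz hw (Or.inl rfl)
  refine ⟨?_, ?_, ?_⟩
  · have := point_mem_genF hcc (i := 1) (by omega)
    simpa using this
  · have hsub := ball0_subset_genF hcc
    simpa [dist_comm] using hsub
  · intro y hy hAyw
    refine ⟨2, _, genCC_two hz hy (Or.inr hAyw), even_two, by simp, by simp⟩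

theorem extChainB_root (hz : z ∈ α) (hw : w ∈ β) : ExtChainB A B α β z w w z := by
  have hcc := genCC_two (A := A) (B := B) (w := w) hz hw (Or.inl rfl)
  refine ⟨?_, ?_, ?_⟩
  · have := point_mem_genF hcc (i := 0) (by omega)
    simpa using this
  · have hsub := ball_subset_genF hcc (i := 1) (le_refl 1) (by omega)
    simpa using hsub
  · intro q hq hBqz
    refine ⟨3, _, genCC_three hz hw hq (Or.inl rfl) hBqz, by decide, by simp, by simp⟩

theorem mem_of_agree {s t F' : Set (V d)} (h : s ∩ F' = t ∩ F') {x : V d} (hx : x ∈ F') :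
    x ∈ s ↔ x ∈ t :=
  ⟨fun hs => (show x ∈ t ∩ F' from h ▸ (⟨hs, hx⟩ : x ∈ s ∩ F')).1,
   fun ht => (show x ∈ s ∩ F' from h.symm ▸ (⟨ht, hx⟩ : x ∈ t ∩ F')).1⟩

end Gadgets
section Master

variable {d : ℕ}
variable (A B : V d → V d → V d → Prop) (α β : Set (V d)) (z w : V d)

/-- Transfer statement at stage `n` from system `(α₁, β₁)` to system `(α₂, β₂)`:
matchings of chain points (with surviving bounds) transfer. -/
def MstmtQ (α₁ β₁ α₂ β₂ : Set (V d)) (n : ℕ) : Prop :=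
  (∀ u x v, ExtChainA A B α β z w u x → ExtChainB A B α β z w x u →
    x ∈ (genStages A B α₁ β₁ n).2 →
    genMutualNN A B (genStages A B α₁ β₁ n).1 (genStages A B α₁ β₁ n).2 u v →
    u ∈ (genStages A B α₂ β₂ n).1 →
    genMutualNN A B (genStages A B α₂ β₂ n).1 (genStages A B α₂ β₂ n).2 u v) ∧
  (∀ v p u, ExtChainB A B α β z w v p → ExtChainA A B α β z w p v →
    p ∈ (genStages A B α₁ β₁ n).1 →
    genMutualNN A B (genStages A B α₁ β₁ n).1 (genStages A B α₁ β₁ n).2 u v →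
    v ∈ (genStages A B α₂ β₂ n).2 →
    genMutualNN A B (genStages A B α₂ β₂ n).1 (genStages A B α₂ β₂ n).2 u v)

variable {A B α β z w}

theorem master_step (hA : PrefAx A) (hB : PrefAx B)
    {α₁ β₁ α₂ β₂ : Set (V d)}
    (hα₁ : α₁ ∩ genF A B α β z w = α ∩ genF A B α β z w)
    (hβ₁ : β₁ ∩ genF A B α β z w = β ∩ genF A B α β z w)
    (hα₂ : α₂ ∩ genF A B α β z w = α ∩ genF A B α β z w)
    (hβ₂ : β₂ ∩ genF A B α β z w = β ∩ genF A B α β z w)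
    {n : ℕ}
    (IH : ∀ k < n, MstmtQ A B α β z w α₁ β₁ α₂ β₂ k ∧ MstmtQ A B α β z w α₂ β₂ α₁ β₁ k) :
    MstmtQ A B α β z w α₁ β₁ α₂ β₂ n := by
  constructor
  -- part Mα : node u on the α-side
  · intro u x v Gux Gxu hxS hMN huT
    obtain ⟨huS, hvS, Hu, Hv⟩ := hMN
    have hvx : v = x ∨ A u v x := by
      by_cases h : v = x
      · exact Or.inl h
      · exact Or.inr (Hu x hxS fun hh => h hh.symm)
    have hdvx : dist v u ≤ dist x u := by
      rcases hvx with rfl | hAx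
      · exact le_refl _
      · exact hA.dist_le u v x hAx
    have hvF : v ∈ genF A B α β z w := by
      rcases hvx with rfl | _
      · exact Gux.1
      · exact Gux.2.1 (by rw [mem_closedBall, dist_comm u x]; exact hdvx)
    have hvβ : v ∈ β :=
      (mem_of_agree hβ₁ hvF).mp (genStages_snd_subset A B α₁ β₁ n hvS)
    have Gvu : ExtChainB A B α β z w v u := by
      rcases hvx with rfl | hAx
      · exact Gxu
      · obtain ⟨m, c, hcc, hev, h1, h2⟩ := Gux.2.2 v hvβ hAx
        exact gadget_of_chain_B hcc hev h1 h2
    have Guv : ExtChainA A B α β z w u v := by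
      refine ⟨hvF, ?_, ?_⟩
      · intro t ht
        apply Gux.2.1
        rw [mem_closedBall] at ht ⊢
        exact le_trans ht (by rw [dist_comm u v, dist_comm u x]; exact hdvx)
      · intro y hy hAy
        refine Gux.2.2 y hy ?_
        rcases hvx with rfl | hAx
        · exact hAy
        · exact hA.trans u y v x hAy hAx
    have hvT : v ∈ (genStages A B α₂ β₂ n).2 := by
      by_contra hc
      have hvβ₂ : v ∈ β₂ := (mem_of_agree hβ₂ hvF).mpr hvβ
      obtain ⟨k, hk, hvk, p, hp⟩ := genRemoved_snd A B α₂ β₂ hvβ₂ hc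
      have hres := (IH k hk).2.2 v u p Gvu Guv
        (genStages_anti_fst A B α₂ β₂ hk.le huT) hp
        (genStages_anti_snd A B α₁ β₁ hk.le hvS)
      exact (gen_not_mem_succ_snd A B α₁ β₁ hres)
        (genStages_anti_snd A B α₁ β₁ (by omega) hvS)
    refine ⟨huT, hvT, ?_, ?_⟩
    · intro y hyT hyv
      by_contra hc
      have hAy : A u y v := (hA.total u v y (Ne.symm hyv)).resolve_left hc
      have hyF : y ∈ genF A B α β z w := by
        apply Gux.2.1
        rw [mem_closedBall, dist_comm u x]
        exact le_trans (hA.dist_le u y v hAy) hdvx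
      have hyβ : y ∈ β :=
        (mem_of_agree hβ₂ hyF).mp (genStages_snd_subset A B α₂ β₂ n hyT)
      have hAyx : A u y x := by
        rcases hvx with rfl | hAx
        · exact hAy
        · exact hA.trans u y v x hAy hAx
      obtain ⟨m, c, hcc, hev, h1, h2⟩ := Gux.2.2 y hyβ hAyx
      have Gyu : ExtChainB A B α β z w y u := gadget_of_chain_B hcc hev h1 h2
      have Guy : ExtChainA A B α β z w u y := by
        refine ⟨hyF, ?_, ?_⟩
        · intro t ht
          apply Gux.2.1
          rw [mem_closedBall] at ht ⊢
          refine le_trans ht ?_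
          rw [dist_comm u y, dist_comm u x]
          exact le_trans (hA.dist_le u y v hAy) hdvx
        · intro y' hy' hA'
          exact Gux.2.2 y' hy' (hA.trans u y' y x hA' hAyx)
      have hynS : y ∉ (genStages A B α₁ β₁ n).2 := fun hyS =>
        hA.asymm u v y (Hu y hyS hyv) hAy
      have hyβ₁ : y ∈ β₁ := (mem_of_agree hβ₁ hyF).mpr hyβ
      obtain ⟨k, hk, hyk, p, hp⟩ := genRemoved_snd A B α₁ β₁ hyβ₁ hynS
      have hres := (IH k hk).1.2 y u p Gyu Guy
        (genStages_anti_fst A B α₁ β₁ hk.le huS) hp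
        (genStages_anti_snd A B α₂ β₂ hk.le hyT)
      exact (gen_not_mem_succ_snd A B α₂ β₂ hres)
        (genStages_anti_snd A B α₂ β₂ (by omega) hyT)
    · intro q hqT hqu
      by_contra hc
      have hBq : B v q u := (hB.total v u q (Ne.symm hqu)).resolve_left hc
      have hqF : q ∈ genF A B α β z w := by
        apply Gvu.2.1
        rw [mem_closedBall, dist_comm v u]
        exact hB.dist_le v q u hBq
      have hqα : q ∈ α :=
        (mem_of_agree hα₂ hqF).mp (genStages_fst_subset A B α₂ β₂ n hqT)
      obtain ⟨m, c, hcc, hodd, h1, h2⟩ := Gvu.2.2 q hqα hBq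
      have Gqv : ExtChainA A B α β z w q v := gadget_of_chain_A hcc hodd h1 h2
      have Gvq : ExtChainB A B α β z w v q := by
        refine ⟨hqF, ?_, ?_⟩
        · intro t ht
          apply Gvu.2.1
          rw [mem_closedBall] at ht ⊢
          refine le_trans ht ?_
          rw [dist_comm v q, dist_comm v u]
          exact hB.dist_le v q u hBq
        · intro q' hq' hB'
          exact Gvu.2.2 q' hq' (hB.trans v q' q u hB' hBq)
      have hqnS : q ∉ (genStages A B α₁ β₁ n).1 := fun hqS =>
        hB.asymm v u q (Hv q hqS hqu) hBq
      have hqα₁ : q ∈ α₁ := (mem_of_agree hα₁ hqF).mpr hqα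
      obtain ⟨k, hk, hqk, v', hp⟩ := genRemoved_fst A B α₁ β₁ hqα₁ hqnS
      have hres := (IH k hk).1.1 q v v' Gqv Gvq
        (genStages_anti_snd A B α₁ β₁ hk.le hvS) hp
        (genStages_anti_fst A B α₂ β₂ hk.le hqT)
      exact (gen_not_mem_succ_fst A B α₂ β₂ hres)
        (genStages_anti_fst A B α₂ β₂ (by omega) hqT)
  -- part Mβ : node v on the β-side
  · intro v p u Gvp Gpv hpS hMN hvT
    obtain ⟨huS, hvS, Hu, Hv⟩ := hMN
    have hup : u = p ∨ B v u p := by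
      by_cases h : u = p
      · exact Or.inl h
      · exact Or.inr (Hv p hpS fun hh => h hh.symm)
    have hdup : dist u v ≤ dist p v := by
      rcases hup with rfl | hBp
      · exact le_refl _
      · exact hB.dist_le v u p hBp
    have huF : u ∈ genF A B α β z w := by
      rcases hup with rfl | _
      · exact Gvp.1
      · exact Gvp.2.1 (by rw [mem_closedBall, dist_comm v p]; exact hdup)
    have huα : u ∈ α :=
      (mem_of_agree hα₁ huF).mp (genStages_fst_subset A B α₁ β₁ n huS)
    have Guv : ExtChainA A B α β z w u v := by
      rcases hup with rfl | hBp
      · exact Gpv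
      · obtain ⟨m, c, hcc, hodd, h1, h2⟩ := Gvp.2.2 u huα hBp
        exact gadget_of_chain_A hcc hodd h1 h2
    have Gvu : ExtChainB A B α β z w v u := by
      refine ⟨huF, ?_, ?_⟩
      · intro t ht
        apply Gvp.2.1
        rw [mem_closedBall] at ht ⊢
        exact le_trans ht (by rw [dist_comm v u, dist_comm v p]; exact hdup)
      · intro q hq hB'
        refine Gvp.2.2 q hq ?_
        rcases hup with rfl | hBp
        · exact hB'
        · exact hB.trans v q u p hB' hBp
    have huT : u ∈ (genStages A B α₂ β₂ n).1 := by
      by_contra hc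
      have huα₂ : u ∈ α₂ := (mem_of_agree hα₂ huF).mpr huα
      obtain ⟨k, hk, huk, v', hp⟩ := genRemoved_fst A B α₂ β₂ huα₂ hc
      have hres := (IH k hk).2.1 u v v' Guv Gvu
        (genStages_anti_snd A B α₂ β₂ hk.le hvT) hp
        (genStages_anti_fst A B α₁ β₁ hk.le huS)
      exact (gen_not_mem_succ_fst A B α₁ β₁ hres)
        (genStages_anti_fst A B α₁ β₁ (by omega) huS)
    refine ⟨huT, hvT, ?_, ?_⟩
    · intro y hyT hyv
      by_contra hc
      have hAy : A u y v := (hA.total u v y (Ne.symm hyv)).resolve_left hc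
      have hyF : y ∈ genF A B α β z w := by
        apply Guv.2.1
        rw [mem_closedBall, dist_comm u v]
        exact hA.dist_le u y v hAy
      have hyβ : y ∈ β :=
        (mem_of_agree hβ₂ hyF).mp (genStages_snd_subset A B α₂ β₂ n hyT)
      obtain ⟨m, c, hcc, hev, h1, h2⟩ := Guv.2.2 y hyβ hAy
      have Gyu : ExtChainB A B α β z w y u := gadget_of_chain_B hcc hev h1 h2
      have Guy : ExtChainA A B α β z w u y := by
        refine ⟨hyF, ?_, ?_⟩
        · intro t ht
          apply Guv.2.1
          rw [mem_closedBall] at ht ⊢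
          refine le_trans ht ?_
          rw [dist_comm u y, dist_comm u v]
          exact hA.dist_le u y v hAy
        · intro y' hy' hA'
          exact Guv.2.2 y' hy' (hA.trans u y' y v hA' hAy)
      have hynS : y ∉ (genStages A B α₁ β₁ n).2 := fun hyS =>
        hA.asymm u v y (Hu y hyS hyv) hAy
      have hyβ₁ : y ∈ β₁ := (mem_of_agree hβ₁ hyF).mpr hyβ
      obtain ⟨k, hk, hyk, p', hp⟩ := genRemoved_snd A B α₁ β₁ hyβ₁ hynS
      have hres := (IH k hk).1.2 y u p' Gyu Guy
        (genStages_anti_fst A B α₁ β₁ hk.le huS) hp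
        (genStages_anti_snd A B α₂ β₂ hk.le hyT)
      exact (gen_not_mem_succ_snd A B α₂ β₂ hres)
        (genStages_anti_snd A B α₂ β₂ (by omega) hyT)
    · intro q hqT hqu
      by_contra hc
      have hBq : B v q u := (hB.total v u q (Ne.symm hqu)).resolve_left hc
      have hqF : q ∈ genF A B α β z w := by
        apply Gvu.2.1
        rw [mem_closedBall, dist_comm v u]
        exact hB.dist_le v q u hBq
      have hqα : q ∈ α :=
        (mem_of_agree hα₂ hqF).mp (genStages_fst_subset A B α₂ β₂ n hqT)
      obtain ⟨m, c, hcc, hodd, h1, h2⟩ := Gvu.2.2 q hqα hBq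
      have Gqv : ExtChainA A B α β z w q v := gadget_of_chain_A hcc hodd h1 h2
      have Gvq : ExtChainB A B α β z w v q := by
        refine ⟨hqF, ?_, ?_⟩
        · intro t ht
          apply Gvu.2.1
          rw [mem_closedBall] at ht ⊢
          refine le_trans ht ?_
          rw [dist_comm v q, dist_comm v u]
          exact hB.dist_le v q u hBq
        · intro q' hq' hB'
          exact Gvu.2.2 q' hq' (hB.trans v q' q u hB' hBq)
      have hqnS : q ∉ (genStages A B α₁ β₁ n).1 := fun hqS =>
        hB.asymm v u q (Hv q hqS hqu) hBq
      have hqα₁ : q ∈ α₁ := (mem_of_agree hα₁ hqF).mpr hqα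
      obtain ⟨k, hk, hqk, v', hp⟩ := genRemoved_fst A B α₁ β₁ hqα₁ hqnS
      have hres := (IH k hk).1.1 q v v' Gqv Gvq
        (genStages_anti_snd A B α₁ β₁ hk.le hvS) hp
        (genStages_anti_fst A B α₂ β₂ hk.le hqT)
      exact (gen_not_mem_succ_fst A B α₂ β₂ hres)
        (genStages_anti_fst A B α₂ β₂ (by omega) hqT)

theorem master (hA : PrefAx A) (hB : PrefAx B)
    {α₁ β₁ α₂ β₂ : Set (V d)}
    (hα₁ : α₁ ∩ genF A B α β z w = α ∩ genF A B α β z w)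
    (hβ₁ : β₁ ∩ genF A B α β z w = β ∩ genF A B α β z w)
    (hα₂ : α₂ ∩ genF A B α β z w = α ∩ genF A B α β z w)
    (hβ₂ : β₂ ∩ genF A B α β z w = β ∩ genF A B α β z w) :
    ∀ n, MstmtQ A B α β z w α₁ β₁ α₂ β₂ n ∧ MstmtQ A B α β z w α₂ β₂ α₁ β₁ n := by
  intro n
  induction n using Nat.strong_induction_on with
  | _ n IH =>
      exact ⟨master_step hA hB hα₁ hβ₁ hα₂ hβ₂ (fun k hk => IH k hk),
        master_step hA hB hα₂ hβ₂ hα₁ hβ₁ (fun k hk => ⟨(IH k hk).2, (IH k hk).1⟩)⟩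

end Master
section GenLocality

variable {d : ℕ}
variable {A B : V d → V d → V d → Prop} {α β α' β' : Set (V d)} {z w : V d}

theorem genF_mono_of_CC
    (h : ∀ m c, genCC A B α β z w m c → genCC A B α' β' z w m c) :
    genF A B α β z w ⊆ genF A B α' β' z w := by
  intro x hx
  simp only [genF, Set.mem_iUnion] at hx ⊢
  obtain ⟨m, c, hcc, hmem⟩ := hx
  exact ⟨m, c, h m c hcc, hmem⟩

theorem genLocality (hA : PrefAx A) (hB : PrefAx B)
    (hN : ∃ N, genMutualNN A B (genStages A B α β N).1 (genStages A B α β N).2 z w)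
    (hagα : α' ∩ genF A B α β z w = α ∩ genF A B α β z w)
    (hagβ : β' ∩ genF A B α β z w = β ∩ genF A B α β z w) :
    (∃ N, genMutualNN A B (genStages A B α' β' N).1 (genStages A B α' β' N).2 z w) ∧
      genF A B α' β' z w = genF A B α β z w := by
  obtain ⟨N, hN⟩ := hN
  have hz : z ∈ α := genStages_fst_subset A B α β N hN.1
  have hw : w ∈ β := genStages_snd_subset A B α β N hN.2.1
  have GA : ExtChainA A B α β z w z w := extChainA_root hz hw
  have GB : ExtChainB A B α β z w w z := extChainB_root hz hw
  have hzF : z ∈ genF A B α β z w := GB.1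
  have hwF : w ∈ genF A B α β z w := GA.1
  have M := master (α₁ := α) (β₁ := β) (α₂ := α') (β₂ := β') hA hB rfl rfl hagα hagβ
  -- survival of z and w in the primed system up to stage N
  have survive : ∀ n ≤ N, z ∈ (genStages A B α' β' n).1 ∧ w ∈ (genStages A B α' β' n).2 := by
    intro n
    induction n with
    | zero =>
        intro _
        exact ⟨(mem_of_agree hagα hzF).mpr hz, (mem_of_agree hagβ hwF).mpr hw⟩
    | succ n ih =>
        intro hn1
        obtain ⟨hz', hw'⟩ := ih (by omega)
        constructor
        · rw [genStages_succ_fst]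
          refine ⟨hz', ?_⟩
          rintro ⟨v, hv⟩
          have hres := (M n).2.1 z w v GA GB hw' hv
            (genStages_anti_fst A B α β (by omega : n ≤ N) hN.1)
          exact (gen_not_mem_succ_fst A B α β hres)
            (genStages_anti_fst A B α β hn1 hN.1)
        · rw [genStages_succ_snd]
          refine ⟨hw', ?_⟩
          rintro ⟨p, hp⟩
          have hres := (M n).2.2 w z p GB GA hz' hp
            (genStages_anti_snd A B α β (by omega : n ≤ N) hN.2.1)
          exact (gen_not_mem_succ_snd A B α β hres)
            (genStages_anti_snd A B α β hn1 hN.2.1)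
  have final : genMutualNN A B (genStages A B α' β' N).1 (genStages A B α' β' N).2 z w := by
    refine ⟨(survive N le_rfl).1, (survive N le_rfl).2, ?_, ?_⟩
    · intro y hyT hyw
      by_contra hc
      have hAy : A z y w := (hA.total z w y (Ne.symm hyw)).resolve_left hc
      have hyF : y ∈ genF A B α β z w := by
        apply GA.2.1
        rw [mem_closedBall, dist_comm z w]
        exact hA.dist_le z y w hAy
      have hyβ : y ∈ β :=
        (mem_of_agree hagβ hyF).mp (genStages_snd_subset A B α' β' N hyT)
      obtain ⟨m, c, hcc, hev, h1, h2⟩ := GA.2.2 y hyβ hAy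
      have Gy : ExtChainB A B α β z w y z := gadget_of_chain_B hcc hev h1 h2
      have Gzy : ExtChainA A B α β z w z y := by
        refine ⟨hyF, ?_, ?_⟩
        · intro t ht
          apply GA.2.1
          rw [mem_closedBall] at ht ⊢
          refine le_trans ht ?_
          rw [dist_comm z y, dist_comm z w]
          exact hA.dist_le z y w hAy
        · intro y' hy' hA'
          exact GA.2.2 y' hy' (hA.trans z y' y w hA' hAy)
      have hynS : y ∉ (genStages A B α β N).2 := fun hyS =>
        hA.asymm z w y (hN.2.2.1 y hyS hyw) hAy
      obtain ⟨k, hk, hyk, p, hp⟩ := genRemoved_snd A B α β hyβ hynS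
      have hres := (M k).1.2 y z p Gy Gzy
        (genStages_anti_fst A B α β hk.le hN.1) hp
        (genStages_anti_snd A B α' β' hk.le hyT)
      exact (gen_not_mem_succ_snd A B α' β' hres)
        (genStages_anti_snd A B α' β' (by omega) hyT)
    · intro q hqT hqz
      by_contra hc
      have hBq : B w q z := (hB.total w z q (Ne.symm hqz)).resolve_left hc
      have hqF : q ∈ genF A B α β z w := by
        apply GB.2.1
        rw [mem_closedBall, dist_comm w z]
        exact hB.dist_le w q z hBq
      have hqα : q ∈ α :=
        (mem_of_agree hagα hqF).mp (genStages_fst_subset A B α' β' N hqT)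
      obtain ⟨m, c, hcc, hodd, h1, h2⟩ := GB.2.2 q hqα hBq
      have Gq : ExtChainA A B α β z w q w := gadget_of_chain_A hcc hodd h1 h2
      have Gwq : ExtChainB A B α β z w w q := by
        refine ⟨hqF, ?_, ?_⟩
        · intro t ht
          apply GB.2.1
          rw [mem_closedBall] at ht ⊢
          refine le_trans ht ?_
          rw [dist_comm w q, dist_comm w z]
          exact hB.dist_le w q z hBq
        · intro q' hq' hB'
          exact GB.2.2 q' hq' (hB.trans w q' q z hB' hBq)
      have hqnS : q ∉ (genStages A B α β N).1 := fun hqS =>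
        hB.asymm w z q (hN.2.2.2 q hqS hqz) hBq
      obtain ⟨k, hk, hqk, v', hp⟩ := genRemoved_fst A B α β hqα hqnS
      have hres := (M k).1.1 q w v' Gq Gwq
        (genStages_anti_snd A B α β hk.le hN.2.1) hp
        (genStages_anti_fst A B α' β' hk.le hqT)
      exact (gen_not_mem_succ_fst A B α' β' hres)
        (genStages_anti_fst A B α' β' (by omega) hqT)
  refine ⟨⟨N, final⟩, ?_⟩
  -- equality of flowers: chain correspondence
  have CC12 : ∀ m c, genCC A B α β z w m c → genCC A B α' β' z w m c := by
    intro m c h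
    obtain ⟨⟨hm2, hmem, hpr⟩, h0, hcomp⟩ := h
    refine ⟨⟨hm2, ?_, hpr⟩, h0, hcomp⟩
    intro i hi
    have hF : c i ∈ genF A B α β z w := point_mem_genF ⟨⟨hm2, hmem, hpr⟩, h0, hcomp⟩ hi
    have := hmem i hi
    split at this <;> rename_i hev
    · rw [if_pos hev]
      exact (mem_of_agree hagα hF).mpr this
    · rw [if_neg hev]
      exact (mem_of_agree hagβ hF).mpr this
  have CC21 : ∀ m c, genCC A B α' β' z w m c → genCC A B α β z w m c := by
    intro m c h
    obtain ⟨⟨hm2, hmem, hpr⟩, h0, hcomp⟩ := h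
    have claim : ∀ j, 2 ≤ j → j ≤ m → genCC A B α β z w j c := by
      intro j hj2
      induction j, hj2 using Nat.le_induction with
      | base =>
          intro hjm
          refine ⟨⟨le_rfl, ?_, fun i h1 h2 => absurd h2 (by omega)⟩, h0, hcomp⟩
          intro i hi
          interval_cases i
          · have : c 0 ∈ α := h0 ▸ hz
            simpa using this
          · have c1F : c 1 ∈ genF A B α β z w := by
              apply GA.2.1
              rw [mem_closedBall, dist_comm z w]
              rcases hcomp with hcw | hAw
              · rw [hcw]
              · exact hA.dist_le z (c 1) w hAw
            have hc1β' : c 1 ∈ β' := by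
              have := hmem 1 (by omega)
              simpa [Nat.not_even_one] using this
            have : c 1 ∈ β := (mem_of_agree hagβ c1F).mp hc1β'
            simpa [Nat.not_even_one] using this
      | succ j hj2 ih =>
          intro hjm
          have hj : genCC A B α β z w j c := ih (by omega)
          refine ⟨⟨by omega, ?_, fun i h1 h2 => hpr i h1 (by omega)⟩, h0, hcomp⟩
          intro i hi
          rcases Nat.lt_or_ge i j with hij | hij
          · exact hj.1.2.1 i hij
          · have hi' : i = j := by omega
            subst hi'
            have hprj := hpr (i - 1) (by omega) (by omega)
            rw [(by omega : i - 1 + 1 = i), (by omega : i - 1 - 1 = i - 2)] at hprj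
            have hd : dist (c i) (c (i - 1)) ≤ dist (c (i - 2)) (c (i - 1)) := by
              split at hprj <;> rename_i hev
              · exact hA.dist_le _ _ _ hprj
              · exact hB.dist_le _ _ _ hprj
            have hF : c i ∈ genF A B α β z w := by
              have hsub := ball_subset_genF hj (i := i - 1) (by omega) (by omega)
              rw [(by omega : i - 1 - 1 = i - 2)] at hsub
              apply hsub
              rw [mem_closedBall, dist_comm (c (i - 1)) (c (i - 2))]
              exact hd
            have hmi := hmem i (by omega)
            split at hmi <;> rename_i hev
            · rw [if_pos hev]
              exact (mem_of_agree hagα hF).mp hmi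
            · rw [if_neg hev]
              exact (mem_of_agree hagβ hF).mp hmi
    exact claim m hm2 le_rfl
  refine Set.Subset.antisymm (genF_mono_of_CC CC21) (genF_mono_of_CC CC12)

end GenLocality
section Bridge

variable {d : ℕ}

theorem mutualNN_unique_phi {φ ψ : Set (V d)} {n n' : ℕ} {z x x' : V d}
    (h : MutualNN (stages φ ψ n).1 (stages φ ψ n).2 z x)
    (h' : MutualNN (stages φ ψ n').1 (stages φ ψ n').2 z x') : x = x' := by
  rw [← genStages_phi, ← genMutualNN_phi] at h h'
  exact genUnique prefPhi prefPsi φ ψ prefAx_prefPhi h h'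

theorem mutualNN_unique_psi {φ ψ : Set (V d)} {n n' : ℕ} {z p p' : V d}
    (h : MutualNN (stages φ ψ n).1 (stages φ ψ n).2 p z)
    (h' : MutualNN (stages φ ψ n').1 (stages φ ψ n').2 p' z) : p = p' := by
  rw [← mutualNN_swap] at h h'
  have e := genStages_psi (d := d) φ ψ
  rw [show (stages φ ψ n).2 = (genStages prefPsi prefPhi ψ φ n).1 from by rw [e], 
      show (stages φ ψ n).1 = (genStages prefPsi prefPhi ψ φ n).2 from by rw [e]] at h
  rw [show (stages φ ψ n').2 = (genStages prefPsi prefPhi ψ φ n').1 from by rw [e], 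
      show (stages φ ψ n').1 = (genStages prefPsi prefPhi ψ φ n').2 from by rw [e]] at h'
  exact genUnique prefPsi prefPhi ψ φ prefAx_prefPsi h h'

theorem matchTau_some_iff_phi {φ ψ : Set (V d)} {z : V d} (hz : z ∈ φ) {w : V d} :
    matchTau φ ψ z = some w ↔ ∃ n, MutualNN (stages φ ψ n).1 (stages φ ψ n).2 z w := by
  unfold matchTau
  rw [if_pos hz]
  by_cases h : ∃ x, ∃ n, MutualNN (stages φ ψ n).1 (stages φ ψ n).2 z x
  · rw [dif_pos h]
    constructor
    · intro he
      obtain ⟨n, hn⟩ := h.choose_spec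
      have he' : h.choose = w := Option.some_injective _ he
      exact ⟨n, he' ▸ hn⟩
    · rintro ⟨n, hn⟩
      obtain ⟨n', hn'⟩ := h.choose_spec
      rw [mutualNN_unique_phi hn' hn]
  · rw [dif_neg h]
    constructor
    · intro he; exact absurd he (by simp)
    · rintro ⟨n, hn⟩; exact absurd ⟨w, n, hn⟩ h

theorem matchTau_some_iff_psi {φ ψ : Set (V d)} {z : V d} (hzφ : z ∉ φ) (hzψ : z ∈ ψ) {w : V d} :
    matchTau φ ψ z = some w ↔ ∃ n, MutualNN (stages φ ψ n).1 (stages φ ψ n).2 w z := by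
  unfold matchTau
  rw [if_neg hzφ, if_pos hzψ]
  by_cases h : ∃ p, ∃ n, MutualNN (stages φ ψ n).1 (stages φ ψ n).2 p z
  · rw [dif_pos h]
    constructor
    · intro he
      obtain ⟨n, hn⟩ := h.choose_spec
      have he' : h.choose = w := Option.some_injective _ he
      exact ⟨n, he' ▸ hn⟩
    · rintro ⟨n, hn⟩
      obtain ⟨n', hn'⟩ := h.choose_spec
      rw [mutualNN_unique_psi hn' hn]
  · rw [dif_neg h]
    constructor
    · intro he; exact absurd he (by simp)
    · rintro ⟨n, hn⟩; exact absurd ⟨w, n, hn⟩ h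

theorem flower_phi_none {φ ψ : Set (V d)} {z : V d} (hz : z ∈ φ)
    (h : matchTau φ ψ z = none) : flower φ ψ z = Set.univ := by
  unfold flower
  rw [if_pos hz, h]

theorem flower_phi_some {φ ψ : Set (V d)} {z w : V d} (hz : z ∈ φ)
    (h : matchTau φ ψ z = some w) :
    flower φ ψ z = genF prefPhi prefPsi φ ψ z w := by
  unfold flower
  rw [if_pos hz, h]
  rfl

theorem flower_psi_none {φ ψ : Set (V d)} {z : V d} (hzφ : z ∉ φ) (hzψ : z ∈ ψ)
    (h : matchTau φ ψ z = none) : flower φ ψ z = Set.univ := by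
  unfold flower
  rw [if_neg hzφ, if_pos hzψ, h]

theorem flower_psi_some {φ ψ : Set (V d)} {z w : V d} (hzφ : z ∉ φ) (hzψ : z ∈ ψ)
    (h : matchTau φ ψ z = some w) :
    flower φ ψ z = genF prefPsi prefPhi ψ φ z w := by
  unfold flower
  rw [if_neg hzφ, if_pos hzψ, h]
  rfl

theorem locality_phi {φ ψ φ' ψ' : Set (V d)} {z : V d} (hz : z ∈ φ) (hz' : z ∈ φ')
    (hagφ : φ' ∩ flower φ ψ z = φ ∩ flower φ ψ z)
    (hagψ : ψ' ∩ flower φ ψ z = ψ ∩ flower φ ψ z) :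
    matchTau φ' ψ' z = matchTau φ ψ z ∧ flower φ' ψ' z = flower φ ψ z := by
  rcases hm : matchTau φ ψ z with _ | w
  · have hF : flower φ ψ z = Set.univ := flower_phi_none hz hm
    rw [hF, Set.inter_univ, Set.inter_univ] at hagφ hagψ
    subst hagφ; subst hagψ
    exact ⟨hm, rfl⟩
  · have hex := (matchTau_some_iff_phi hz).mp hm
    have hexg : ∃ N, genMutualNN prefPhi prefPsi (genStages prefPhi prefPsi φ ψ N).1
        (genStages prefPhi prefPsi φ ψ N).2 z w := by
      obtain ⟨n, hn⟩ := hex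
      exact ⟨n, by rw [genStages_phi, genMutualNN_phi]; exact hn⟩
    have hFg : flower φ ψ z = genF prefPhi prefPsi φ ψ z w := flower_phi_some hz hm
    have hloc := genLocality (α' := φ') (β' := ψ') prefAx_prefPhi prefAx_prefPsi hexg
      (by rw [← hFg]; exact hagφ) (by rw [← hFg]; exact hagψ)
    have hm' : matchTau φ' ψ' z = some w := by
      apply (matchTau_some_iff_phi hz').mpr
      obtain ⟨N, hN⟩ := hloc.1
      rw [genStages_phi, genMutualNN_phi] at hN
      exact ⟨N, hN⟩
    refine ⟨hm', ?_⟩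
    rw [flower_phi_some hz' hm', hFg]
    exact hloc.2

theorem locality_psi {φ ψ φ' ψ' : Set (V d)} {z : V d} (hzφ : z ∉ φ) (hzψ : z ∈ ψ)
    (hzφ' : z ∉ φ') (hzψ' : z ∈ ψ')
    (hagφ : φ' ∩ flower φ ψ z = φ ∩ flower φ ψ z)
    (hagψ : ψ' ∩ flower φ ψ z = ψ ∩ flower φ ψ z) :
    matchTau φ' ψ' z = matchTau φ ψ z ∧ flower φ' ψ' z = flower φ ψ z := by
  rcases hm : matchTau φ ψ z with _ | w
  · have hF : flower φ ψ z = Set.univ := flower_psi_none hzφ hzψ hm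
    rw [hF, Set.inter_univ, Set.inter_univ] at hagφ hagψ
    subst hagφ; subst hagψ
    exact ⟨hm, rfl⟩
  · have hex := (matchTau_some_iff_psi hzφ hzψ).mp hm
    have hexg : ∃ N, genMutualNN prefPsi prefPhi (genStages prefPsi prefPhi ψ φ N).1
        (genStages prefPsi prefPhi ψ φ N).2 z w := by
      obtain ⟨n, hn⟩ := hex
      refine ⟨n, ?_⟩
      rw [genStages_psi]
      exact (mutualNN_swap _ _ w z).mpr hn
    have hFg : flower φ ψ z = genF prefPsi prefPhi ψ φ z w := flower_psi_some hzφ hzψ hm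
    have hloc := genLocality (α' := ψ') (β' := φ') prefAx_prefPsi prefAx_prefPhi hexg
      (by rw [← hFg]; exact hagψ) (by rw [← hFg]; exact hagφ)
    have hm' : matchTau φ' ψ' z = some w := by
      apply (matchTau_some_iff_psi hzφ' hzψ').mpr
      obtain ⟨N, hN⟩ := hloc.1
      rw [genStages_psi] at hN
      exact ⟨N, (mutualNN_swap _ _ w z).mp hN⟩
    refine ⟨hm', ?_⟩
    rw [flower_psi_some hzφ' hzψ' hm', hFg]
    exact hloc.2

theorem main_phi {φ ψ W : Set (V d)} {z : V d} (hzW : z ∈ W) (hz : z ∈ φ) :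
    (flower φ ψ z ⊆ W ↔ flower (φ ∩ W) (ψ ∩ W) z ⊆ W) ∧
    (flower φ ψ z ⊆ W → matchTau φ ψ z = matchTau (φ ∩ W) (ψ ∩ W) z) := by
  have fwd : flower φ ψ z ⊆ W →
      matchTau (φ ∩ W) (ψ ∩ W) z = matchTau φ ψ z ∧
        flower (φ ∩ W) (ψ ∩ W) z = flower φ ψ z := by
    intro hsub
    apply locality_phi (φ' := φ ∩ W) (ψ' := ψ ∩ W) hz (Set.mem_inter hz hzW)
    · ext x
      constructor
      · rintro ⟨⟨h1, _⟩, h3⟩; exact ⟨h1, h3⟩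
      · rintro ⟨h1, h3⟩; exact ⟨⟨h1, hsub h3⟩, h3⟩
    · ext x
      constructor
      · rintro ⟨⟨h1, _⟩, h3⟩; exact ⟨h1, h3⟩
      · rintro ⟨h1, h3⟩; exact ⟨⟨h1, hsub h3⟩, h3⟩
  have bwd : flower (φ ∩ W) (ψ ∩ W) z ⊆ W → flower φ ψ z ⊆ W := by
    intro hsub
    have hloc := locality_phi (φ := φ ∩ W) (ψ := ψ ∩ W) (φ' := φ) (ψ' := ψ)
      ⟨hz, hzW⟩ hz
      (by ext x
          constructor
          · rintro ⟨h1, h3⟩; exact ⟨⟨h1, hsub h3⟩, h3⟩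
          · rintro ⟨⟨h1, _⟩, h3⟩; exact ⟨h1, h3⟩)
      (by ext x
          constructor
          · rintro ⟨h1, h3⟩; exact ⟨⟨h1, hsub h3⟩, h3⟩
          · rintro ⟨⟨h1, _⟩, h3⟩; exact ⟨h1, h3⟩)
    rw [hloc.2]
    exact hsub
  refine ⟨⟨fun h => by rw [(fwd h).2]; exact h, bwd⟩, fun h => ((fwd h).1).symm⟩

theorem main_psi {φ ψ W : Set (V d)} {z : V d} (hzW : z ∈ W) (hzφ : z ∉ φ) (hzψ : z ∈ ψ) :
    (flower φ ψ z ⊆ W ↔ flower (φ ∩ W) (ψ ∩ W) z ⊆ W) ∧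
    (flower φ ψ z ⊆ W → matchTau φ ψ z = matchTau (φ ∩ W) (ψ ∩ W) z) := by
  have hzφ' : z ∉ φ ∩ W := fun h => hzφ h.1
  have fwd : flower φ ψ z ⊆ W →
      matchTau (φ ∩ W) (ψ ∩ W) z = matchTau φ ψ z ∧
        flower (φ ∩ W) (ψ ∩ W) z = flower φ ψ z := by
    intro hsub
    apply locality_psi (φ' := φ ∩ W) (ψ' := ψ ∩ W) hzφ hzψ hzφ' (Set.mem_inter hzψ hzW)
    · ext x
      constructor
      · rintro ⟨⟨h1, _⟩, h3⟩; exact ⟨h1, h3⟩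
      · rintro ⟨h1, h3⟩; exact ⟨⟨h1, hsub h3⟩, h3⟩
    · ext x
      constructor
      · rintro ⟨⟨h1, _⟩, h3⟩; exact ⟨h1, h3⟩
      · rintro ⟨h1, h3⟩; exact ⟨⟨h1, hsub h3⟩, h3⟩
  have bwd : flower (φ ∩ W) (ψ ∩ W) z ⊆ W → flower φ ψ z ⊆ W := by
    intro hsub
    have hloc := locality_psi (φ := φ ∩ W) (ψ := ψ ∩ W) (φ' := φ) (ψ' := ψ)
      hzφ' ⟨hzψ, hzW⟩ hzφ hzψ
      (by ext x
          constructor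
          · rintro ⟨h1, h3⟩; exact ⟨⟨h1, hsub h3⟩, h3⟩
          · rintro ⟨⟨h1, _⟩, h3⟩; exact ⟨h1, h3⟩)
      (by ext x
          constructor
          · rintro ⟨h1, h3⟩; exact ⟨⟨h1, hsub h3⟩, h3⟩
          · rintro ⟨⟨h1, _⟩, h3⟩; exact ⟨h1, h3⟩)
    rw [hloc.2]
    exact hsub
  refine ⟨⟨fun h => by rw [(fwd h).2]; exact h, bwd⟩, fun h => ((fwd h).1).symm⟩

end Bridge
/-- The matching flower is a stopping set: for `z ∈ W`,
`F(φ^z, ψ, z) ⊆ W` iff `F(φ^z ∩ W, ψ ∩ W, z) ⊆ W`, and in that case the matching partners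
of `z` agree; analogously when `z` is added to the second configuration. -/
theorem statement7 (d : ℕ) (φ ψ : Set (V d)) (hφ : LocFinite φ) (hψ : LocFinite ψ)
    (W : Set (V d)) (z : V d) (hz : z ∈ W) :
    ((flower (insert z φ) ψ z ⊆ W ↔ flower (insert z φ ∩ W) (ψ ∩ W) z ⊆ W) ∧
      (flower (insert z φ) ψ z ⊆ W →
        matchTau (insert z φ) ψ z = matchTau (insert z φ ∩ W) (ψ ∩ W) z)) ∧
    ((flower φ (insert z ψ) z ⊆ W ↔ flower (φ ∩ W) (insert z ψ ∩ W) z ⊆ W) ∧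
      (flower φ (insert z ψ) z ⊆ W →
        matchTau φ (insert z ψ) z = matchTau (φ ∩ W) (insert z ψ ∩ W) z)) := by
  constructor
  · exact main_phi hz (Set.mem_insert z φ)
  · by_cases hzφ : z ∈ φ
    · exact main_phi hz hzφ
    · exact main_psi hz hzφ (Set.mem_insert z ψ)

end
end

section
/- For every dimension d ≥ 1 and every compact convex set K ⊂ ℝ^d, the number of integer lattice points in K differs from the Lebesgue volume of K by at most twice the volume increment under dilation by a ball of radius √d: |λ_d(K) − #(ℤ^d ∩ K)| ≤ 2 (λ_d(K + B(0,√d)) − λ_d(K)), where K + B(0,√d) denotes the Minkowski sum of K with the closed Euclidean ball of radius √d centred at the origin. -/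
open MeasureTheory Set Metric
open scoped ENNReal ENat NNReal Pointwise

noncomputable section

variable {d : ℕ}

/-- half-open cube of side 1 centered at the integer point `k`. -/
def Ck (k : Fin d → ℤ) : Set (V d) :=
  {x | ∀ i, x i ∈ Set.Ico ((k i : ℝ) - 2⁻¹) ((k i : ℝ) + 2⁻¹)}

lemma Ck_eq_preimage (k : Fin d → ℤ) :
    Ck k = ((MeasurableEquiv.toLp 2 (Fin d → ℝ)).symm) ⁻¹'
      (Set.pi Set.univ fun i => Set.Ico ((k i : ℝ) - 2⁻¹) ((k i : ℝ) + 2⁻¹)) := by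
  ext x
  simp [Ck, Set.mem_pi]

lemma measurableSet_Ck (k : Fin d → ℤ) : MeasurableSet (Ck k) := by
  rw [Ck_eq_preimage]
  exact (MeasurableEquiv.measurable _) (MeasurableSet.univ_pi fun i => measurableSet_Ico)

lemma volume_Ck (k : Fin d → ℤ) : volume (Ck k) = 1 := by
  rw [Ck_eq_preimage,
    (EuclideanSpace.volume_preserving_symm_measurableEquiv_toLp (Fin d)).measure_preimage
      ((MeasurableSet.univ_pi fun i => measurableSet_Ico).nullMeasurableSet)]
  simp only [Real.volume_Ico, volume_pi_pi]
  norm_num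

lemma mem_Ck_self (k : Fin d → ℤ) : intVec k ∈ Ck k := by
  intro i
  simp only [Set.mem_Ico, intVec]
  constructor <;> norm_num

lemma iUnion_Ck : (⋃ k : Fin d → ℤ, Ck k) = Set.univ := by
  ext x
  simp only [Set.mem_iUnion, Set.mem_univ, iff_true]
  refine ⟨fun i => ⌊x i + 2⁻¹⌋, fun i => ?_⟩
  have h1 := Int.floor_le (x i + 2⁻¹)
  have h2 := Int.lt_floor_add_one (x i + 2⁻¹)
  constructor <;> [linarith; linarith]

lemma pairwise_disjoint_Ck : Pairwise (Function.onFun Disjoint (Ck (d := d))) := by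
  intro k k' hkk'
  rw [Function.onFun, Set.disjoint_left]
  intro x hx hx'
  apply hkk'
  funext i
  have h1 := hx i
  have h2 := hx' i
  have hlt : (k i : ℝ) < k' i + 1 := by
    have := h1.1; have := h2.2; simp only [Set.mem_Ico] at h1 h2; linarith [h1.1, h1.2, h2.1, h2.2]
  have hlt' : (k' i : ℝ) < k i + 1 := by
    simp only [Set.mem_Ico] at h1 h2; linarith [h1.1, h1.2, h2.1, h2.2]
  have : k i < k' i + 1 := by exact_mod_cast hlt
  have : k' i < k i + 1 := by exact_mod_cast hlt'
  omega

lemma tsum_Ck_inter (A : Set (V d)) (hA : MeasurableSet A) :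
    ∑' k : Fin d → ℤ, volume (Ck k ∩ A) = volume A := by
  rw [← measure_iUnion (fun k k' h => (pairwise_disjoint_Ck h).mono inter_subset_left inter_subset_left)
    (fun k => (measurableSet_Ck k).inter hA)]
  rw [← Set.iUnion_inter, iUnion_Ck, Set.univ_inter]

lemma dist_le_of_mem_Ck {k : Fin d → ℤ} {x y : V d} (hx : x ∈ Ck k) (hy : y ∈ Ck k) :
    dist x y ≤ Real.sqrt d := by
  rw [EuclideanSpace.dist_eq]
  apply Real.sqrt_le_sqrt
  calc ∑ i, dist (x i) (y i) ^ 2 ≤ ∑ _i : Fin d, 1 := by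
        apply Finset.sum_le_sum
        intro i _
        have h1 := hx i; have h2 := hy i
        simp only [Set.mem_Ico] at h1 h2
        rw [Real.dist_eq]
        have : |x i - y i| ≤ 1 := by rw [abs_le]; constructor <;> linarith [h1.1, h1.2, h2.1, h2.2]
        calc |x i - y i| ^ 2 = |x i - y i| * |x i - y i| := sq (|x i - y i|) ▸ by ring
          _ ≤ 1 * 1 := by apply mul_le_mul this this (abs_nonneg _) zero_le_one
          _ = 1 := by ring
    _ = d := by simp

lemma refl_preimage_volume (p : V d) (A : Set (V d)) :
    volume ((fun x => p + p - x) ⁻¹' A) = volume A := by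
  have h : (fun x : V d => p + p - x) = (fun x => -x) ∘ (fun x => x + (-(p+p))) := by
    funext x; simp [neg_sub]; abel
  rw [h, Set.preimage_comp, measure_preimage_add_right]
  exact Measure.measure_preimage_neg volume A

lemma volume_Qk (k : Fin d → ℤ) :
    volume {x : V d | ∀ i, x i ∈ Set.Icc ((k i : ℝ) - 2⁻¹) ((k i : ℝ) + 2⁻¹)} = 1 := by
  have h : {x : V d | ∀ i, x i ∈ Set.Icc ((k i : ℝ) - 2⁻¹) ((k i : ℝ) + 2⁻¹)} =
      ((MeasurableEquiv.toLp 2 (Fin d → ℝ)).symm) ⁻¹'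
        (Set.pi Set.univ fun i => Set.Icc ((k i : ℝ) - 2⁻¹) ((k i : ℝ) + 2⁻¹)) := by
    ext x; rw [Set.mem_preimage, Set.mem_univ_pi]; exact Iff.rfl
  rw [h, (EuclideanSpace.volume_preserving_symm_measurableEquiv_toLp (Fin d)).measure_preimage
      ((MeasurableSet.univ_pi fun i => measurableSet_Icc).nullMeasurableSet)]
  simp only [Real.volume_Icc, volume_pi_pi]
  norm_num

lemma measurableSet_Qk (k : Fin d → ℤ) :
    MeasurableSet {x : V d | ∀ i, x i ∈ Set.Icc ((k i : ℝ) - 2⁻¹) ((k i : ℝ) + 2⁻¹)} := by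
  have h : {x : V d | ∀ i, x i ∈ Set.Icc ((k i : ℝ) - 2⁻¹) ((k i : ℝ) + 2⁻¹)} =
      ((MeasurableEquiv.toLp 2 (Fin d → ℝ)).symm) ⁻¹'
        (Set.pi Set.univ fun i => Set.Icc ((k i : ℝ) - 2⁻¹) ((k i : ℝ) + 2⁻¹)) := by
    ext x; rw [Set.mem_preimage, Set.mem_univ_pi]; exact Iff.rfl
  rw [h]
  exact (MeasurableEquiv.measurable _) (MeasurableSet.univ_pi fun i => measurableSet_Icc)

lemma volume_Ck_inter_le_half {K : Set (V d)} (hKcl : IsClosed K) (hKc : Convex ℝ K)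
    {k : Fin d → ℤ} (hk : intVec k ∉ K) : volume (Ck k ∩ K) ≤ 2⁻¹ := by
  obtain ⟨f, u, hfK, hfp⟩ := geometric_hahn_banach_closed_point hKc hKcl hk
  set p : V d := intVec k with hp
  set Q : Set (V d) := {x | ∀ i, x i ∈ Set.Icc ((k i : ℝ) - 2⁻¹) ((k i : ℝ) + 2⁻¹)} with hQ
  set H : Set (V d) := f ⁻¹' Set.Iio u with hH
  have hHm : MeasurableSet H := f.continuous.measurable measurableSet_Iio
  have hQm : MeasurableSet Q := measurableSet_Qk k
  set R : V d → V d := fun x => p + p - x with hR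
  have hRm : Measurable R := measurable_const.sub measurable_id
  have hpi : ∀ i, p i = (k i : ℝ) := fun i => rfl
  have hRapp : ∀ (x : V d) (i : Fin d), (R x) i = (k i : ℝ) + (k i : ℝ) - x i := by
    intro x i
    show (p + p - x) i = _
    simp [PiLp.sub_apply, PiLp.add_apply, hpi]
  have hRQ : R ⁻¹' Q = Q := by
    ext x
    simp only [Set.mem_preimage, hQ, Set.mem_setOf_eq, Set.mem_Icc]
    constructor
    · intro h i; have := h i; rw [hRapp x i] at this; constructor <;> linarith [this.1, this.2]
    · intro h i; have := h i; rw [hRapp x i]; constructor <;> linarith [this.1, this.2]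
  have hfR : ∀ x : V d, f (R x) = f p + f p - f x := by
    intro x; rw [hR]; simp [map_sub, map_add]
  have hdisj : Disjoint H (R ⁻¹' H) := by
    rw [Set.disjoint_left]
    intro x hx hx'
    simp only [Set.mem_preimage, hH, Set.mem_Iio] at hx hx'
    rw [hfR] at hx'
    linarith
  have hsub : Ck k ∩ K ⊆ Q ∩ H := by
    intro x hx
    refine ⟨fun i => ?_, ?_⟩
    · have := hx.1 i; simp only [Set.mem_Ico] at this; exact ⟨this.1, le_of_lt this.2⟩
    · exact Set.mem_preimage.2 (Set.mem_Iio.2 (hfK x hx.2))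
  have key : volume (Q ∩ H) ≤ 2⁻¹ := by
    have heq : volume (Q ∩ R ⁻¹' H) = volume (Q ∩ H) := by
      have : Q ∩ R ⁻¹' H = R ⁻¹' (Q ∩ H) := by rw [Set.preimage_inter, hRQ]
      rw [this, refl_preimage_volume]
    have hone : volume (Q ∩ H) + volume (Q ∩ H) ≤ 1 := by
      calc volume (Q ∩ H) + volume (Q ∩ H)
          = volume (Q ∩ H) + volume (Q ∩ R ⁻¹' H) := by rw [heq]
        _ = volume ((Q ∩ H) ∪ (Q ∩ R ⁻¹' H)) :=
            (measure_union (hdisj.mono Set.inter_subset_right Set.inter_subset_right)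
              (hQm.inter (hRm hHm))).symm
        _ ≤ volume Q := measure_mono (Set.union_subset Set.inter_subset_left Set.inter_subset_left)
        _ = 1 := volume_Qk k
    calc volume (Q ∩ H) = 2⁻¹ * (volume (Q ∩ H) + volume (Q ∩ H)) := by
          rw [← two_mul, ← mul_assoc, ENNReal.inv_mul_cancel two_ne_zero ENNReal.ofNat_ne_top, one_mul]
      _ ≤ 2⁻¹ * 1 := mul_le_mul_right hone _
      _ = 2⁻¹ := mul_one _
  exact le_trans (measure_mono hsub) key

lemma abs_apply_le_norm (x : V d) (i : Fin d) : |x i| ≤ ‖x‖ := by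
  rw [EuclideanSpace.norm_eq]
  rw [← Real.sqrt_sq_eq_abs]
  apply Real.sqrt_le_sqrt
  have : |x i| ^ 2 ≤ ∑ j, ‖x j‖ ^ 2 := by
    have h := Finset.single_le_sum (f := fun j => ‖x j‖ ^ 2)
      (fun j _ => sq_nonneg _) (Finset.mem_univ i)
    simpa [Real.norm_eq_abs, sq_abs] using h
  simpa [sq_abs] using this

lemma finite_s {K : Set (V d)} (hK : Bornology.IsBounded K) :
    {k : Fin d → ℤ | (Ck k ∩ K).Nonempty}.Finite := by
  obtain ⟨R, hR⟩ := hK.subset_closedBall 0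
  have : {k : Fin d → ℤ | (Ck k ∩ K).Nonempty} ⊆
      Set.pi Set.univ fun _ : Fin d => Set.Icc (-(⌈R⌉ + 1)) (⌈R⌉ + 1) := by
    rintro k ⟨x, hxC, hxK⟩
    intro i _
    have hxR : ‖x‖ ≤ R := by
      have := hR hxK; rwa [mem_closedBall, dist_zero_right] at this
    have h1 : |x i| ≤ R := le_trans (abs_apply_le_norm x i) hxR
    have h2 := hxC i
    simp only [Set.mem_Ico] at h2
    have h3 : |(k i : ℝ)| ≤ R + 1 := by
      rw [abs_le] at h1 ⊢; constructor <;> linarith [h2.1, h2.2]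
    have h4 : (|k i| : ℝ) ≤ ((⌈R⌉ + 1 : ℤ) : ℝ) := by
      push_cast
      calc (|k i| : ℝ) = |(k i : ℝ)| := by push_cast; rfl
        _ ≤ R + 1 := h3
        _ ≤ ⌈R⌉ + 1 := by linarith [Int.le_ceil R]
    have h5 : |k i| ≤ ⌈R⌉ + 1 := by exact_mod_cast h4
    rw [Set.mem_Icc]
    rw [abs_le] at h5
    exact h5
  exact Set.Finite.subset (Set.Finite.pi fun i => Set.finite_Icc _ _) this


lemma intVec_injective : Function.Injective (intVec (d := d)) := by
  intro a b h
  funext i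
  have : ((a i : ℝ)) = (b i : ℝ) := congrArg (fun v : V d => v i) h
  exact_mod_cast this

lemma lattice_inter_ncard (K : Set (V d)) :
    (lattice d ∩ K).ncard = ({k : Fin d → ℤ | intVec k ∈ K}).ncard := by
  have h1 : lattice d ∩ K = intVec '' {k | intVec k ∈ K} := by
    rw [show lattice d = Set.range (intVec (d := d)) from rfl,
      ← Set.image_preimage_eq_range_inter]
    rfl
  rw [h1, Set.ncard_image_of_injective _ intVec_injective]


/-- For every dimension `d ≥ 1` and every compact convex `K ⊆ ℝ^d`,
`|λ_d(K) − #(ℤ^d ∩ K)| ≤ 2 (λ_d(K + B(0,√d)) − λ_d(K))`. -/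
theorem statement8 (d : ℕ) (hd : 1 ≤ d) (K : Set (V d))
    (hK : IsCompact K) (hKc : Convex ℝ K) :
    |(volume K).toReal - ((lattice d ∩ K).ncard : ℝ)| ≤
      2 * ((volume (K + closedBall (0 : V d) (Real.sqrt d))).toReal - (volume K).toReal) := by

  rw [show ((lattice d ∩ K).ncard : ℝ) = (({k : Fin d → ℤ | intVec k ∈ K}).ncard : ℝ) by
    rw [lattice_inter_ncard]]

  classical
  set BB : Set (V d) := closedBall (0 : V d) (Real.sqrt d) with hBB
  have hKm : MeasurableSet K := hK.isClosed.measurableSet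
  have hKB : IsCompact (K + BB) := hK.add (isCompact_closedBall _ _)
  have hKBm : MeasurableSet (K + BB) := hKB.isClosed.measurableSet
  have h0B : (0 : V d) ∈ BB := by
    rw [hBB, mem_closedBall, dist_self]; exact Real.sqrt_nonneg _
  have hKsub : K ⊆ K + BB := by
    intro x hx
    have := Set.add_mem_add hx h0B
    rwa [add_zero] at this
  set s : Set (Fin d → ℤ) := {k | intVec k ∈ K} with hs
  have hst : s ⊆ {k | (Ck k ∩ K).Nonempty} := fun k hk => ⟨intVec k, mem_Ck_self k, hk⟩
  have hsfin : s.Finite := (finite_s hK.isBounded).subset hst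
  set n : ℝ≥0∞ := (s.ncard : ℝ≥0∞) with hn
  have hDmeas : MeasurableSet ((K + BB) \ K) := hKBm.diff hKm
  set D : ℝ≥0∞ := volume ((K + BB) \ K) with hD
  have htsum_ind : ∑' k : Fin d → ℤ, s.indicator (fun _ => (1:ℝ≥0∞)) k = n := by
    haveI := hsfin.fintype
    rw [← tsum_subtype, tsum_fintype]
    simp only [Finset.sum_const, Finset.card_univ, nsmul_eq_mul, mul_one, hn]
    rw [← Nat.card_eq_fintype_card, Nat.card_coe_set_eq]
  have hEsum : ∑' k : Fin d → ℤ, volume (Ck k ∩ ((K+BB)\K)) = D := tsum_Ck_inter _ hDmeas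
  have hCk_sub : ∀ k : Fin d → ℤ, (Ck k ∩ K).Nonempty → Ck k ⊆ K + BB := by
    rintro k ⟨y, hyC, hyK⟩ x hx
    have hb : x - y ∈ BB := by
      rw [hBB, mem_closedBall, dist_zero_right, ← dist_eq_norm]
      exact dist_le_of_mem_Ck hx hyC
    have := Set.add_mem_add hyK hb
    have hxy : y + (x - y) = x := by abel
    rwa [hxy] at this
  have hdiff_sub : ∀ k : Fin d → ℤ, (Ck k ∩ K).Nonempty →
      Ck k \ K ⊆ Ck k ∩ ((K+BB)\K) :=
    fun k hk x hx => ⟨hx.1, hCk_sub k hk hx.1, hx.2⟩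
  have hsplit : ∀ k : Fin d → ℤ, volume (Ck k ∩ K) + volume (Ck k \ K) = 1 := by
    intro k; rw [measure_inter_add_diff _ hKm, volume_Ck]
  have hi : volume K ≤ n + D := by
    rw [← tsum_Ck_inter K hKm, ← htsum_ind, ← hEsum, ← ENNReal.tsum_add]
    apply ENNReal.tsum_le_tsum
    intro k
    by_cases hks : k ∈ s
    · calc volume (Ck k ∩ K) ≤ 1 := by
            rw [← volume_Ck k]; exact measure_mono Set.inter_subset_left
        _ ≤ _ := by rw [Set.indicator_of_mem hks]; exact le_self_add
    · by_cases hkt : (Ck k ∩ K).Nonempty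
      · have h1 : volume (Ck k ∩ K) ≤ 2⁻¹ := volume_Ck_inter_le_half hK.isClosed hKc hks
        have h2 : (2:ℝ≥0∞)⁻¹ ≤ volume (Ck k \ K) := by
          by_contra hlt
          push_neg at hlt
          have hne : volume (Ck k ∩ K) ≠ ⊤ :=
            (lt_of_le_of_lt h1 (by norm_num)).ne
          have hcontr := ENNReal.add_lt_add_of_le_of_lt hne h1 hlt
          rw [hsplit k] at hcontr
          have : (2:ℝ≥0∞)⁻¹ + 2⁻¹ = 1 := ENNReal.inv_two_add_inv_two
          rw [this] at hcontr
          exact lt_irrefl _ hcontr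
        calc volume (Ck k ∩ K) ≤ 2⁻¹ := h1
          _ ≤ volume (Ck k \ K) := h2
          _ ≤ volume (Ck k ∩ ((K+BB)\K)) := measure_mono (hdiff_sub k hkt)
          _ ≤ _ := le_add_self
      · rw [Set.not_nonempty_iff_eq_empty.mp hkt, measure_empty]
        exact zero_le
  have hii : n ≤ volume K + D := by
    rw [← tsum_Ck_inter K hKm, ← htsum_ind, ← hEsum, ← ENNReal.tsum_add]
    apply ENNReal.tsum_le_tsum
    intro k
    by_cases hks : k ∈ s
    · rw [Set.indicator_of_mem hks]
      have hne : (Ck k ∩ K).Nonempty := ⟨intVec k, mem_Ck_self k, hks⟩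
      calc (1:ℝ≥0∞) = volume (Ck k ∩ K) + volume (Ck k \ K) := (hsplit k).symm
        _ ≤ _ := add_le_add_right (measure_mono (hdiff_sub k hne)) _
    · rw [Set.indicator_of_notMem hks]; exact zero_le
  have hKfin : volume K ≠ ⊤ := hK.measure_lt_top.ne
  have hDfin : D ≠ ⊤ := (lt_of_le_of_lt (measure_mono Set.diff_subset) hKB.measure_lt_top).ne
  have hnfin : n ≠ ⊤ := ENNReal.natCast_ne_top _
  have hvol_add : volume K + D = volume (K + BB) := by
    rw [hD, measure_add_diff hKm.nullMeasurableSet, Set.union_eq_self_of_subset_left hKsub]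
  have hb : (volume (K+BB)).toReal = (volume K).toReal + D.toReal := by
    rw [← hvol_add, ENNReal.toReal_add hKfin hDfin]
  have hi' : (volume K).toReal ≤ (s.ncard : ℝ) + D.toReal := by
    have h := ENNReal.toReal_mono (ENNReal.add_ne_top.mpr ⟨hnfin, hDfin⟩) hi
    rw [ENNReal.toReal_add hnfin hDfin] at h
    simpa [hn] using h
  have hii' : (s.ncard : ℝ) ≤ (volume K).toReal + D.toReal := by
    have h := ENNReal.toReal_mono (ENNReal.add_ne_top.mpr ⟨hKfin, hDfin⟩) hii
    rw [ENNReal.toReal_add hKfin hDfin] at h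
    simpa [hn] using h
  have hD0 : 0 ≤ D.toReal := ENNReal.toReal_nonneg
  rw [abs_sub_le_iff]
  constructor
  · linarith
  · linarith


end
end
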